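/- arXiv:1705.10652 — 6 statements merged into one kernel-verified Lean document; each statement's English description precedes it below -/
import Mathlib

section
/- If s(t) = 1 + εt with ε ∈ (0,1), then the function φ(t) = ln(1+εt)/ln((1+ε)/(1-ε)) satisfies the functional equation φ(t + s(t)) − φ(t − s(t)) = 1 for all t ≥ 0. -/
open Real

theorem linear_boundary_functional_equation
    (ε : ℝ) (hε : ε ∈ Set.Ioo (0:ℝ) 1)
    (s : ℝ → ℝ) (hs : ∀ t, s t = 1 + ε * t)
    (φ : ℝ → ℝ) (hφ : ∀ t, φ t = Real.log (1 + ε * t) / Real.log ((1 + ε) / (1 - ε))) :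
    ∀ t : ℝ, 0 ≤ t → φ (t + s t) - φ (t - s t) = 1 := by
  obtain ⟨hε0, hε1⟩ := hε
  intro t ht
  have h1 : (0:ℝ) < 1 + ε := by linarith
  have h2 : (0:ℝ) < 1 - ε := by linarith
  have h3 : (0:ℝ) < 1 + ε * t := by positivity
  have hratio : (1:ℝ) < (1 + ε) / (1 - ε) := by
    rw [lt_div_iff₀ h2]; linarith
  have hlogne : Real.log ((1 + ε) / (1 - ε)) ≠ 0 :=
    ne_of_gt (Real.log_pos hratio)
  have e1 : 1 + ε * (t + s t) = (1 + ε) * (1 + ε * t) := by rw [hs]; ring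
  have e2 : 1 + ε * (t - s t) = (1 - ε) * (1 + ε * t) := by rw [hs]; ring
  rw [hφ, hφ, e1, e2, div_sub_div_same,
    Real.log_mul (ne_of_gt h1) (ne_of_gt h3),
    Real.log_mul (ne_of_gt h2) (ne_of_gt h3),
    Real.log_div (ne_of_gt h1) (ne_of_gt h2)]
  have : Real.log (1 + ε) - Real.log (1 - ε) ≠ 0 := by
    rwa [Real.log_div (ne_of_gt h1) (ne_of_gt h2)] at hlogne
  field_simp
  ring
end

section
/- If s(t) = √(1+εt) with ε ∈ (0,2), then φ(t) = (1/(2ε))·√(ε² + 4εt + 4) satisfies φ(t + s(t)) − φ(t − s(t)) = 1 for all t ≥ 0. -/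
open Real

theorem parabolic_boundary_functional_equation
    (ε : ℝ) (hε : ε ∈ Set.Ioo (0:ℝ) 2)
    (s : ℝ → ℝ) (hs : ∀ t, s t = Real.sqrt (1 + ε * t))
    (φ : ℝ → ℝ) (hφ : ∀ t, φ t = (1 / (2 * ε)) * Real.sqrt (ε ^ 2 + 4 * ε * t + 4)) :
    ∀ t : ℝ, 0 ≤ t → φ (t + s t) - φ (t - s t) = 1 := by
  obtain ⟨hε0, hε2⟩ := hε
  intro t ht
  have h1 : (0:ℝ) ≤ 1 + ε * t := by positivity
  set u := Real.sqrt (1 + ε * t) with hu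
  have hu2 : u ^ 2 = 1 + ε * t := Real.sq_sqrt h1
  have hu1 : 1 ≤ u := by
    rw [hu]
    have : (1:ℝ) = Real.sqrt 1 := (Real.sqrt_one).symm
    rw [this]
    exact Real.sqrt_le_sqrt (by nlinarith)
  have e1 : ε ^ 2 + 4 * ε * (t + u) + 4 = (2 * u + ε) ^ 2 := by nlinarith
  have e2 : ε ^ 2 + 4 * ε * (t - u) + 4 = (2 * u - ε) ^ 2 := by nlinarith
  have s1 : Real.sqrt (ε ^ 2 + 4 * ε * (t + u) + 4) = 2 * u + ε := by
    rw [e1, Real.sqrt_sq (by nlinarith)]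
  have s2 : Real.sqrt (ε ^ 2 + 4 * ε * (t - u) + 4) = 2 * u - ε := by
    rw [e2, Real.sqrt_sq (by nlinarith)]
  rw [hφ, hφ, hs, ← hu, s1, s2]
  field_simp
  ring
end

section
/- If s(t) = (1/ε)(−1 + √(1 + (1+εt)²)) with ε > 0, then φ(t) = εt/(1+εt) satisfies φ(t + s(t)) − φ(t − s(t)) = 1 for all t ≥ 0. -/
open Real

theorem hyperbolic_boundary_functional_equation
    (ε : ℝ) (hε : 0 < ε)
    (s : ℝ → ℝ) (hs : ∀ t, s t = (1 / ε) * (-1 + Real.sqrt (1 + (1 + ε * t) ^ 2)))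
    (φ : ℝ → ℝ) (hφ : ∀ t, φ t = ε * t / (1 + ε * t)) :
    ∀ t : ℝ, 0 ≤ t → φ (t + s t) - φ (t - s t) = 1 := by
  intro t ht
  set a : ℝ := 1 + ε * t with ha
  have ha1 : 1 ≤ a := by nlinarith [mul_nonneg hε.le ht]
  set r : ℝ := Real.sqrt (1 + a ^ 2) with hrdef
  have hr2 : r ^ 2 = 1 + a ^ 2 := Real.sq_sqrt (by positivity)
  have hr0 : 0 < r := Real.sqrt_pos.mpr (by positivity)
  have hrlt : r < a + 1 := by nlinarith
  have hrgt : a < r := by nlinarith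
  rw [hφ, hφ, hs]
  have hεt1 : 1 + ε * (t + (1 / ε) * (-1 + r)) = a + r - 1 := by
    field_simp; ring
  have hεt2 : 1 + ε * (t - (1 / ε) * (-1 + r)) = a + 1 - r := by
    field_simp; ring
  have hεt1' : ε * (t + (1 / ε) * (-1 + r)) = a + r - 2 := by
    field_simp; ring
  have hεt2' : ε * (t - (1 / ε) * (-1 + r)) = a - r := by
    field_simp; ring
  rw [hεt1, hεt2, hεt1', hεt2']
  have h1 : (0:ℝ) < a + r - 1 := by linarith
  have h2 : (0:ℝ) < a + 1 - r := by linarith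
  field_simp
  nlinarith
end

section
/- Let g ∈ H¹₀([0,1]), f ∈ L²([0,1]), and let φ be a C² solution of the functional equation with φ' > 0; let A_n = ∫₋₁¹ h(x) e^{2πin φ(x)} φ'(x) dx be the Fourier coefficients of the function h built from (g,f). Then 8π² m(0) Σ_{n∈ℤ} n²|A_n|² ≤ ‖g'‖²_{L²(0,1)} + ‖f‖²_{L²(0,1)} ≤ 8π² M(0) Σ_{n∈ℤ} n²|A_n|², where m(0) = min_{[−1,1]} φ' and M(0) = max_{[−1,1]} φ'. -/
open Real MeasureTheory intervalIntegral

section AuxNorm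

open Set AddCircle

lemma aux_measurable_liftIoc (a : ℝ) (GF : ℝ → ℂ) (hGF : Measurable GF) :
    Measurable (AddCircle.liftIoc 1 a GF) := by
  have : AddCircle.liftIoc 1 a GF =
      (GF ∘ (Subtype.val : Set.Ioc a (a+1) → ℝ)) ∘ (AddCircle.measurableEquivIoc 1 a) := rfl
  rw [this]
  exact (hGF.comp measurable_subtype_coe).comp (AddCircle.measurableEquivIoc 1 a).measurable

lemma parseval_Ioc (a : ℝ) (GF : ℝ → ℂ) (hGF : Measurable GF)
    (C : ℝ) (hC : ∀ u, ‖GF u‖ ≤ C) :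
    ∑' n : ℤ, ‖∫ u in Set.Ioc a (a+1),
        Complex.exp (2 * Real.pi * Complex.I * (n:ℂ) * (u:ℂ)) * GF u‖ ^ 2
      = ∫ u in Set.Ioc a (a+1), ‖GF u‖ ^ 2 := by
  haveI : Fact ((0:ℝ) < 1) := ⟨one_pos⟩
  have hLmeas : Measurable (AddCircle.liftIoc 1 a GF) := aux_measurable_liftIoc a GF hGF
  have hLbound : ∀ z, ‖AddCircle.liftIoc 1 a GF z‖ ≤ C := fun z => hC _
  have hmem : MemLp (AddCircle.liftIoc 1 a GF) 2 (@haarAddCircle 1 _) :=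
    MemLp.of_bound hLmeas.aestronglyMeasurable C (Filter.Eventually.of_forall hLbound)
  have hcoe : ⇑(hmem.toLp _) =ᵐ[@haarAddCircle 1 _] AddCircle.liftIoc 1 a GF :=
    MemLp.coeFn_toLp hmem
  have hcoeff : ∀ n : ℤ, fourierCoeff (⇑(hmem.toLp _)) n
      = fourierCoeff (AddCircle.liftIoc 1 a GF) n := by
    intro n
    unfold fourierCoeff
    apply MeasureTheory.integral_congr_ae
    filter_upwards [hcoe] with z hz
    rw [hz]
  have hcoeffL : ∀ n : ℤ, fourierCoeff (AddCircle.liftIoc 1 a GF) (-n)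
      = ∫ u in Set.Ioc a (a+1),
          Complex.exp (2 * Real.pi * Complex.I * (n:ℂ) * (u:ℂ)) * GF u := by
    intro n
    rw [fourierCoeff_eq_intervalIntegral _ (-n) a]
    rw [intervalIntegral.integral_of_le (by linarith : a ≤ a + 1)]
    rw [one_div_one, one_smul]
    apply setIntegral_congr_fun measurableSet_Ioc
    intro x hx
    simp only [AddCircle.liftIoc_coe_apply hx, fourier_coe_apply, smul_eq_mul]
    push_cast
    rw [div_one]
    ring_nf
  calc ∑' n : ℤ, ‖∫ u in Set.Ioc a (a+1),
        Complex.exp (2 * Real.pi * Complex.I * (n:ℂ) * (u:ℂ)) * GF u‖ ^ 2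
      = ∑' n : ℤ, ‖fourierCoeff (⇑(hmem.toLp _)) (-n)‖ ^ 2 := by
        apply tsum_congr; intro n; rw [hcoeff, hcoeffL]
    _ = ∑' n : ℤ, ‖fourierCoeff (⇑(hmem.toLp _)) n‖ ^ 2 := by
        exact (Equiv.neg ℤ).tsum_eq (fun n => ‖fourierCoeff (⇑(hmem.toLp _)) n‖ ^ 2)
    _ = ∫ z, ‖(hmem.toLp _) z‖ ^ 2 ∂(@haarAddCircle 1 _) := tsum_sq_fourierCoeff _
    _ = ∫ z, ‖AddCircle.liftIoc 1 a GF z‖ ^ 2 ∂(@haarAddCircle 1 _) := by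
        apply MeasureTheory.integral_congr_ae
        filter_upwards [hcoe] with z hz
        rw [hz]
    _ = ∫ z, ‖AddCircle.liftIoc 1 a GF z‖ ^ 2 := by
        rw [AddCircle.volume_eq_smul_haarAddCircle]
        simp
    _ = ∫ u in Set.Ioc a (a+1), ‖AddCircle.liftIoc 1 a GF (u : ℝ)‖ ^ 2 := by
        rw [AddCircle.integral_preimage 1 a (fun z : AddCircle 1 => ‖AddCircle.liftIoc 1 a GF z‖ ^ 2)]
    _ = ∫ u in Set.Ioc a (a+1), ‖GF u‖ ^ 2 := by
        apply setIntegral_congr_fun measurableSet_Ioc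
        intro x hx
        simp only [AddCircle.liftIoc_coe_apply hx]

lemma cov_Ioc {F : Type*} [NormedAddCommGroup F] [NormedSpace ℝ F] (φ φ' : ℝ → ℝ)
    (hφ : ∀ x, HasDerivAt φ (φ' x) x) (hpos : ∀ x, 0 < φ' x) (g : ℝ → F) :
    ∫ u in Set.Ioc (φ (-1)) (φ 1), g u = ∫ x in Set.Ioc (-1:ℝ) 1, φ' x • g (φ x) := by
  have hmono : StrictMono φ :=
    strictMono_of_deriv_pos (fun x => by rw [(hφ x).deriv]; exact hpos x)
  have hcont : Continuous φ := by
    rw [continuous_iff_continuousAt]; exact fun x => (hφ x).continuousAt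
  have himg : φ '' Set.Ioc (-1:ℝ) 1 = Set.Ioc (φ (-1)) (φ 1) := by
    ext u
    constructor
    · rintro ⟨x, hx, rfl⟩
      exact ⟨hmono hx.1, hmono.le_iff_le.2 hx.2⟩
    · intro hu
      have hsub : Set.Icc (φ (-1)) (φ 1) ⊆ φ '' Set.Icc (-1:ℝ) 1 :=
        intermediate_value_Icc (by norm_num) hcont.continuousOn
      obtain ⟨x, hx, hxu⟩ := hsub ⟨le_of_lt hu.1, hu.2⟩
      refine ⟨x, ⟨?_, hx.2⟩, hxu⟩
      by_contra hc
      push_neg at hc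
      have : x = -1 := le_antisymm hc hx.1
      rw [this] at hxu
      rw [hxu] at hu
      exact lt_irrefl _ hu.1
  rw [← himg, integral_image_eq_integral_abs_deriv_smul measurableSet_Ioc
    (fun x _ => (hφ x).hasDerivWithinAt) (hmono.injective.injOn) g]
  apply setIntegral_congr_fun measurableSet_Ioc
  intro x _
  simp only [abs_of_pos (hpos x)]

end AuxNorm

theorem norm_equivalence_fourier_coefficients
    (g g' f : ℝ → ℝ)
    (hg : ∀ x ∈ Set.Icc (0:ℝ) 1, HasDerivAt g (g' x) x)
    (hg' : ContinuousOn g' (Set.Icc (0:ℝ) 1))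
    (hf : ContinuousOn f (Set.Icc (0:ℝ) 1))
    (hg0 : g 0 = 0) (hg1 : g 1 = 0)
    (F : ℝ → ℝ) (hF : ∀ x, F x = ∫ t in (0:ℝ)..x, f t)
    (h : ℝ → ℝ)
    (hdef : ∀ x ∈ Set.Icc (0:ℝ) 1, h x = (g x + F x) / 2)
    (hdef' : ∀ x ∈ Set.Ico (-1:ℝ) 0, h x = (-g (-x) + F (-x)) / 2)
    (φ φ' : ℝ → ℝ)
    (hφ : ∀ x, HasDerivAt φ (φ' x) x)
    (hφ' : ContDiff ℝ 1 φ')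
    (hφpos : ∀ x, 0 < φ' x)
    (hfe : φ 1 - φ (-1) = 1)
    (A : ℤ → ℂ)
    (hA : ∀ n : ℤ, A n = ∫ x in (-1:ℝ)..1,
        (h x : ℂ) * Complex.exp (2 * Real.pi * Complex.I * (n : ℂ) * (φ x : ℂ)) * (φ' x : ℂ))
    (m0 M0 : ℝ)
    (hm0 : IsLeast (φ' '' Set.Icc (-1:ℝ) 1) m0)
    (hM0 : IsGreatest (φ' '' Set.Icc (-1:ℝ) 1) M0) :
    8 * Real.pi ^ 2 * m0 * (∑' n : ℤ, (n : ℝ) ^ 2 * ‖A n‖ ^ 2)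
      ≤ (∫ x in (0:ℝ)..1, g' x ^ 2) + (∫ x in (0:ℝ)..1, f x ^ 2) ∧
    (∫ x in (0:ℝ)..1, g' x ^ 2) + (∫ x in (0:ℝ)..1, f x ^ 2)
      ≤ 8 * Real.pi ^ 2 * M0 * (∑' n : ℤ, (n : ℝ) ^ 2 * ‖A n‖ ^ 2) := by
  classical
  -- basic facts about φ
  have hmono : StrictMono φ :=
    strictMono_of_deriv_pos (fun x => by rw [(hφ x).deriv]; exact hφpos x)
  have hcont : Continuous φ := by
    rw [continuous_iff_continuousAt]; exact fun x => (hφ x).continuousAt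
  have hφ'c : Continuous φ' := hφ'.continuous
  have hm0pos : 0 < m0 := by
    obtain ⟨x₀, -, hx₀⟩ := hm0.1
    rw [← hx₀]; exact hφpos x₀
  have hm0le : ∀ x ∈ Set.Icc (-1:ℝ) 1, m0 ≤ φ' x := fun x hx => hm0.2 ⟨x, hx, rfl⟩
  have hM0ge : ∀ x ∈ Set.Icc (-1:ℝ) 1, φ' x ≤ M0 := fun x hx => hM0.2 ⟨x, hx, rfl⟩
  have hb : φ 1 = φ (-1) + 1 := by linarith
  have hab : φ (-1) < φ 1 := hmono (by norm_num)
  -- continuous extensions of g' and f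
  set g'c : ℝ → ℝ := Set.IccExtend zero_le_one ((Set.Icc (0:ℝ) 1).restrict g') with hg'cdef
  set fc : ℝ → ℝ := Set.IccExtend zero_le_one ((Set.Icc (0:ℝ) 1).restrict f) with hfcdef
  have hg'c_cont : Continuous g'c := (continuousOn_iff_continuous_restrict.mp hg').Icc_extend'
  have hfc_cont : Continuous fc := (continuousOn_iff_continuous_restrict.mp hf).Icc_extend'
  have hg'c_eq : ∀ x ∈ Set.Icc (0:ℝ) 1, g'c x = g' x := fun x hx => by
    rw [hg'cdef, Set.IccExtend_of_mem _ _ hx]; rfl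
  have hfc_eq : ∀ x ∈ Set.Icc (0:ℝ) 1, fc x = f x := fun x hx => by
    rw [hfcdef, Set.IccExtend_of_mem _ _ hx]; rfl
  obtain ⟨Cg, hCg⟩ := isCompact_Icc.exists_bound_of_continuousOn hg'
  obtain ⟨Cf, hCf⟩ := isCompact_Icc.exists_bound_of_continuousOn hf
  have hg'c_bd : ∀ x : ℝ, |g'c x| ≤ Cg := by
    intro x
    have hmem := (Set.projIcc (0:ℝ) 1 zero_le_one x).2
    have heq : g'c x = g' (Set.projIcc (0:ℝ) 1 zero_le_one x) := rfl
    rw [heq, ← Real.norm_eq_abs]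
    exact hCg _ hmem
  have hfc_bd : ∀ x : ℝ, |fc x| ≤ Cf := by
    intro x
    have hmem := (Set.projIcc (0:ℝ) 1 zero_le_one x).2
    have heq : fc x = f (Set.projIcc (0:ℝ) 1 zero_le_one x) := rfl
    rw [heq, ← Real.norm_eq_abs]
    exact hCf _ hmem
  -- primitives
  set gc : ℝ → ℝ := fun x => ∫ t in (0:ℝ)..x, g'c t with hgcdef
  set Fc : ℝ → ℝ := fun x => ∫ t in (0:ℝ)..x, fc t with hFcdef
  have hgc : ∀ x, HasDerivAt gc (g'c x) x := fun x =>
    (hg'c_cont.integral_hasStrictDerivAt 0 x).hasDerivAt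
  have hFcd : ∀ x, HasDerivAt Fc (fc x) x := fun x =>
    (hfc_cont.integral_hasStrictDerivAt 0 x).hasDerivAt
  have hgc_eq : ∀ x ∈ Set.Icc (0:ℝ) 1, gc x = g x := by
    intro x hx
    have h1 : (∫ t in (0:ℝ)..x, g'c t) = ∫ t in (0:ℝ)..x, g' t := by
      apply intervalIntegral.integral_congr
      intro t ht
      rw [Set.uIcc_of_le hx.1] at ht
      exact hg'c_eq t ⟨ht.1, le_trans ht.2 hx.2⟩
    have h2 : (∫ t in (0:ℝ)..x, g' t) = g x - g 0 := by
      apply intervalIntegral.integral_eq_sub_of_hasDerivAt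
      · intro t ht
        rw [Set.uIcc_of_le hx.1] at ht
        exact hg t ⟨ht.1, le_trans ht.2 hx.2⟩
      · apply ContinuousOn.intervalIntegrable
        apply hg'.mono
        rw [Set.uIcc_of_le hx.1]
        exact Set.Icc_subset_Icc le_rfl hx.2
    show (∫ t in (0:ℝ)..x, g'c t) = g x
    rw [h1, h2, hg0, sub_zero]
  have hFc_eq : ∀ x ∈ Set.Icc (0:ℝ) 1, Fc x = F x := by
    intro x hx
    rw [hF x]
    show (∫ t in (0:ℝ)..x, fc t) = _
    apply intervalIntegral.integral_congr
    intro t ht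
    rw [Set.uIcc_of_le hx.1] at ht
    exact hfc_eq t ⟨ht.1, le_trans ht.2 hx.2⟩
  -- the two smooth halves
  set p : ℝ → ℝ := fun x => (gc x + Fc x) / 2 with hpdef
  set p' : ℝ → ℝ := fun x => (g'c x + fc x) / 2 with hp'def
  set q : ℝ → ℝ := fun x => (-gc (-x) + Fc (-x)) / 2 with hqdef
  set q' : ℝ → ℝ := fun x => (g'c (-x) - fc (-x)) / 2 with hq'def
  have hp'c : Continuous p' := by
    rw [hp'def]; exact (hg'c_cont.add hfc_cont).div_const 2
  have hq'c : Continuous q' := by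
    rw [hq'def]
    exact ((hg'c_cont.comp continuous_neg).sub (hfc_cont.comp continuous_neg)).div_const 2
  have hpc : Continuous p := by
    rw [hpdef]
    exact (((continuous_iff_continuousAt).2 fun x => (hgc x).continuousAt).add
      ((continuous_iff_continuousAt).2 fun x => (hFcd x).continuousAt)).div_const 2
  have hqc : Continuous q := by
    rw [hqdef]
    refine Continuous.div_const (Continuous.add ?_ ?_) 2
    · exact (((continuous_iff_continuousAt).2 fun x => (hgc x).continuousAt).comp
        continuous_neg).neg
    · exact ((continuous_iff_continuousAt).2 fun x => (hFcd x).continuousAt).comp continuous_neg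
  have hpd : ∀ x, HasDerivAt p (p' x) x := fun x => ((hgc x).add (hFcd x)).div_const 2
  have hqd : ∀ x, HasDerivAt q (q' x) x := by
    intro x
    have h1 : HasDerivAt (fun y : ℝ => gc (-y)) (-g'c (-x)) x := by
      simpa [Function.comp_def] using (hgc (-x)).comp x (hasDerivAt_neg x)
    have h2 : HasDerivAt (fun y : ℝ => Fc (-y)) (-fc (-x)) x := by
      simpa [Function.comp_def] using (hFcd (-x)).comp x (hasDerivAt_neg x)
    have h3 := (h1.neg.add h2).div_const 2
    convert h3 using 1
    show (g'c (-x) - fc (-x)) / 2 = _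
    ring
    all_goals rfl
  have hph : ∀ x ∈ Set.Icc (0:ℝ) 1, h x = p x := by
    intro x hx
    rw [hdef x hx]
    show _ = (gc x + Fc x) / 2
    rw [hgc_eq x hx, hFc_eq x hx]
  have hqh : ∀ x ∈ Set.Ico (-1:ℝ) 0, h x = q x := by
    intro x hx
    have hmx : -x ∈ Set.Icc (0:ℝ) 1 := ⟨by linarith [hx.2], by linarith [hx.1]⟩
    rw [hdef' x hx]
    show _ = (-gc (-x) + Fc (-x)) / 2
    rw [hgc_eq _ hmx, hFc_eq _ hmx]
  have hgc0 : gc 0 = 0 := by show (∫ t in (0:ℝ)..0, g'c t) = 0; simp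
  have hFc0 : Fc 0 = 0 := by show (∫ t in (0:ℝ)..0, fc t) = 0; simp
  have hgc1 : gc 1 = 0 := by
    rw [hgc_eq 1 ⟨zero_le_one, le_rfl⟩, hg1]
  have hp0 : p 0 = 0 := by show (gc 0 + Fc 0) / 2 = 0; rw [hgc0, hFc0]; ring
  have hq0 : q 0 = 0 := by show (-gc (-0) + Fc (-0)) / 2 = 0; rw [neg_zero, hgc0, hFc0]; ring
  have hp1q : p 1 = q (-1) := by
    show (gc 1 + Fc 1) / 2 = (-gc (-(-1)) + Fc (-(-1))) / 2
    rw [neg_neg, hgc1]; ring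

  -- the exponential factor
  set E : ℤ → ℝ → ℂ := fun n y => Complex.exp (2 * Real.pi * Complex.I * (n : ℂ) * (φ y : ℂ))
    with hEdef
  have hEd : ∀ (n : ℤ) (x : ℝ), HasDerivAt (E n)
      (2 * Real.pi * Complex.I * (n : ℂ) * (φ' x : ℂ) * E n x) x := by
    intro n x
    have h1 : HasDerivAt (fun y : ℝ => ((φ y : ℝ) : ℂ)) ((φ' x : ℂ)) x := (hφ x).ofReal_comp
    have h2 := (h1.const_mul (2 * (Real.pi:ℂ) * Complex.I * (n:ℂ))).cexp
    convert h2 using 1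
    ring
  have hEcont : ∀ n : ℤ, Continuous (E n) := by
    intro n
    rw [hEdef]
    exact Complex.continuous_exp.comp
      (continuous_const.mul (Complex.continuous_ofReal.comp hcont))
  have hEnorm : ∀ (n : ℤ) (x : ℝ), ‖E n x‖ = 1 := by
    intro n x
    rw [hEdef]
    show ‖Complex.exp _‖ = 1
    rw [show (2 * Real.pi * Complex.I * (n : ℂ) * (φ x : ℂ))
        = ((2 * Real.pi * n * φ x : ℝ) : ℂ) * Complex.I by push_cast; ring]
    exact Complex.norm_exp_ofReal_mul_I _
  have hEper : ∀ n : ℤ, E n 1 = E n (-1) := by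
    intro n
    rw [hEdef]
    show Complex.exp _ = Complex.exp _
    have hcoe : ((φ 1 : ℝ) : ℂ) = ((φ (-1) : ℝ) : ℂ) + 1 := by rw [hb]; push_cast; ring
    rw [hcoe, mul_add, Complex.exp_add, mul_one,
      show (2 * (Real.pi:ℂ) * Complex.I * (n:ℂ)) = (n:ℂ) * (2 * Real.pi * Complex.I) by ring,
      Complex.exp_int_mul_two_pi_mul_I, mul_one]
  -- integration by parts on the two halves
  have ibpP : ∀ n : ℤ,
      (∫ x in (0:ℝ)..1, (p x : ℂ) * (2 * Real.pi * Complex.I * (n:ℂ) * (φ' x : ℂ) * E n x))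
        = (p 1 : ℂ) * E n 1 - (p 0 : ℂ) * E n 0 - ∫ x in (0:ℝ)..1, (p' x : ℂ) * E n x := by
    intro n
    apply intervalIntegral.integral_mul_deriv_eq_deriv_mul
    · intro x _; exact (hpd x).ofReal_comp
    · intro x _; exact hEd n x
    · exact ((Complex.continuous_ofReal.comp hp'c)).intervalIntegrable _ _
    · exact ((continuous_const.mul (Complex.continuous_ofReal.comp hφ'c)).mul
        (hEcont n)).intervalIntegrable _ _
  have ibpQ : ∀ n : ℤ,
      (∫ x in (-1:ℝ)..0, (q x : ℂ) * (2 * Real.pi * Complex.I * (n:ℂ) * (φ' x : ℂ) * E n x))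
        = (q 0 : ℂ) * E n 0 - (q (-1) : ℂ) * E n (-1) - ∫ x in (-1:ℝ)..0, (q' x : ℂ) * E n x := by
    intro n
    apply intervalIntegral.integral_mul_deriv_eq_deriv_mul
    · intro x _; exact (hqd x).ofReal_comp
    · intro x _; exact hEd n x
    · exact ((Complex.continuous_ofReal.comp hq'c)).intervalIntegrable _ _
    · exact ((continuous_const.mul (Complex.continuous_ofReal.comp hφ'c)).mul
        (hEcont n)).intervalIntegrable _ _
  -- almost-everywhere nonzero
  have hane : ∀ᵐ x : ℝ, x ≠ (0:ℝ) := by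
    refine (MeasureTheory.ae_iff).2 ?_
    simpa using Real.volume_singleton
  -- splitting A n
  have hAsplit : ∀ n : ℤ, A n = (∫ x in (-1:ℝ)..0, (q x:ℂ) * E n x * (φ' x:ℂ))
      + ∫ x in (0:ℝ)..1, (p x:ℂ) * E n x * (φ' x:ℂ) := by
    intro n
    have hIq : IntervalIntegrable (fun x => (q x:ℂ) * E n x * (φ' x:ℂ)) volume (-1) 0 :=
      (((Complex.continuous_ofReal.comp hqc).mul (hEcont n)).mul
        (Complex.continuous_ofReal.comp hφ'c)).intervalIntegrable _ _
    have hIp : IntervalIntegrable (fun x => (p x:ℂ) * E n x * (φ' x:ℂ)) volume 0 1 :=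
      (((Complex.continuous_ofReal.comp hpc).mul (hEcont n)).mul
        (Complex.continuous_ofReal.comp hφ'c)).intervalIntegrable _ _
    have e1 : (∫ x in (-1:ℝ)..0, (h x:ℂ) * E n x * (φ' x:ℂ))
        = ∫ x in (-1:ℝ)..0, (q x:ℂ) * E n x * (φ' x:ℂ) := by
      apply intervalIntegral.integral_congr_ae
      filter_upwards [hane] with x hx0 hxmem
      rw [Set.uIoc_of_le (by norm_num : (-1:ℝ) ≤ 0)] at hxmem
      rw [hqh x ⟨le_of_lt hxmem.1, lt_of_le_of_ne hxmem.2 hx0⟩]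
    have e2 : (∫ x in (0:ℝ)..1, (h x:ℂ) * E n x * (φ' x:ℂ))
        = ∫ x in (0:ℝ)..1, (p x:ℂ) * E n x * (φ' x:ℂ) := by
      apply intervalIntegral.integral_congr
      intro x hx
      rw [Set.uIcc_of_le zero_le_one] at hx
      simp only [hph x hx]
    have hIq' : IntervalIntegrable (fun x => (h x:ℂ) * E n x * (φ' x:ℂ)) volume (-1) 0 := by
      rw [intervalIntegrable_iff] at hIq ⊢
      apply hIq.congr
      filter_upwards [ae_restrict_mem measurableSet_uIoc, ae_restrict_of_ae hane]
        with x hxmem hx0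
      rw [Set.uIoc_of_le (by norm_num : (-1:ℝ) ≤ 0)] at hxmem
      rw [hqh x ⟨le_of_lt hxmem.1, lt_of_le_of_ne hxmem.2 hx0⟩]
    have hIp' : IntervalIntegrable (fun x => (h x:ℂ) * E n x * (φ' x:ℂ)) volume 0 1 := by
      rw [intervalIntegrable_iff] at hIp ⊢
      apply hIp.congr
      filter_upwards [ae_restrict_mem measurableSet_uIoc] with x hxmem
      rw [Set.uIoc_of_le zero_le_one] at hxmem
      rw [hph x ⟨le_of_lt hxmem.1, hxmem.2⟩]
    rw [hA n, ← intervalIntegral.integral_add_adjacent_intervals hIq' hIp', e1, e2]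
  -- the integrated-by-parts coefficients
  set B : ℤ → ℂ := fun n => (∫ x in (-1:ℝ)..0, (q' x:ℂ) * E n x)
      + ∫ x in (0:ℝ)..1, (p' x:ℂ) * E n x with hBdef
  have key : ∀ n : ℤ, (2 * Real.pi * Complex.I * (n:ℂ)) * A n = - B n := by
    intro n
    have h1 : (2 * Real.pi * Complex.I * (n:ℂ)) * (∫ x in (0:ℝ)..1, (p x:ℂ) * E n x * (φ' x:ℂ))
        = (p 1 : ℂ) * E n 1 - (p 0 : ℂ) * E n 0 - ∫ x in (0:ℝ)..1, (p' x : ℂ) * E n x := by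
      rw [← ibpP n, ← intervalIntegral.integral_const_mul]
      apply intervalIntegral.integral_congr
      intro x _
      ring
    have h2 : (2 * Real.pi * Complex.I * (n:ℂ)) * (∫ x in (-1:ℝ)..0, (q x:ℂ) * E n x * (φ' x:ℂ))
        = (q 0 : ℂ) * E n 0 - (q (-1) : ℂ) * E n (-1) - ∫ x in (-1:ℝ)..0, (q' x : ℂ) * E n x := by
      rw [← ibpQ n, ← intervalIntegral.integral_const_mul]
      apply intervalIntegral.integral_congr
      intro x _
      ring
    rw [hAsplit n, mul_add, h1, h2]
    show _ = -((∫ x in (-1:ℝ)..0, (q' x:ℂ) * E n x) + ∫ x in (0:ℝ)..1, (p' x:ℂ) * E n x)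
    rw [hp0, hq0, hp1q, hEper n]
    push_cast
    ring

  -- the piecewise derivative h₁ and its properties
  set h₁ : ℝ → ℝ := fun x => if 0 ≤ x then p' x else q' x with hh₁def
  have hh₁meas : Measurable h₁ := by
    rw [hh₁def]
    exact Measurable.ite (measurableSet_le measurable_const measurable_id)
      hp'c.measurable hq'c.measurable
  have hp'bd : ∀ x : ℝ, |p' x| ≤ (Cg + Cf)/2 := by
    intro x
    have h1 := abs_le.1 (hg'c_bd x); have h2 := abs_le.1 (hfc_bd x)
    have e : p' x = (g'c x + fc x)/2 := rfl
    rw [e, abs_le]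
    constructor <;> [linarith; linarith]
  have hq'bd : ∀ x : ℝ, |q' x| ≤ (Cg + Cf)/2 := by
    intro x
    have h1 := abs_le.1 (hg'c_bd (-x)); have h2 := abs_le.1 (hfc_bd (-x))
    have e : q' x = (g'c (-x) - fc (-x))/2 := rfl
    rw [e, abs_le]
    constructor <;> [linarith; linarith]
  have hC₁ : ∀ x : ℝ, |h₁ x| ≤ (Cg + Cf)/2 := by
    intro x
    have e : h₁ x = if 0 ≤ x then p' x else q' x := rfl
    rw [e]
    by_cases hx : 0 ≤ x
    · rw [if_pos hx]; exact hp'bd x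
    · rw [if_neg hx]; exact hq'bd x
  have hCC : 0 ≤ (Cg + Cf)/2 := le_trans (abs_nonneg _) (hC₁ 0)
  -- inverse function ψ
  have hsurj : Set.Icc (φ (-1)) (φ 1) ⊆ φ '' Set.Icc (-1:ℝ) 1 :=
    intermediate_value_Icc (by norm_num) hcont.continuousOn
  set ψ : ℝ → ℝ := fun u => Function.invFun φ (max (φ (-1)) (min (φ 1) u)) with hψdef
  have hinv : ∀ w ∈ Set.Icc (φ (-1)) (φ 1),
      φ (Function.invFun φ w) = w ∧ Function.invFun φ w ∈ Set.Icc (-1:ℝ) 1 := by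
    intro w hw
    obtain ⟨x, hx, hxw⟩ := hsurj hw
    have e : Function.invFun φ w = x := by
      rw [← hxw]; exact Function.leftInverse_invFun hmono.injective x
    rw [e]; exact ⟨hxw, hx⟩
  have hclamp_mem : ∀ u : ℝ, max (φ (-1)) (min (φ 1) u) ∈ Set.Icc (φ (-1)) (φ 1) :=
    fun u => ⟨le_max_left _ _, max_le hab.le (min_le_left _ _)⟩
  have hψmem : ∀ u, ψ u ∈ Set.Icc (-1:ℝ) 1 := fun u => (hinv _ (hclamp_mem u)).2
  have hψval : ∀ u, φ (ψ u) = max (φ (-1)) (min (φ 1) u) := fun u => (hinv _ (hclamp_mem u)).1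
  have hψφ : ∀ x ∈ Set.Icc (-1:ℝ) 1, ψ (φ x) = x := by
    intro x hx
    have h1 : min (φ 1) (φ x) = φ x := min_eq_right (hmono.monotone hx.2)
    have h2 : max (φ (-1)) (φ x) = φ x := max_eq_right (hmono.monotone hx.1)
    show Function.invFun φ _ = x
    rw [h1, h2]
    exact Function.leftInverse_invFun hmono.injective x
  have hψmono : Monotone ψ := by
    intro u v huv
    have e : φ (ψ u) ≤ φ (ψ v) := by
      rw [hψval u, hψval v]
      exact max_le_max le_rfl (min_le_min le_rfl huv)
    exact hmono.le_iff_le.1 e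
  -- the transplanted function GF
  set GF : ℝ → ℂ := fun u => ((h₁ (ψ u) / φ' (ψ u) : ℝ) : ℂ) with hGFdef
  have hGFmeas : Measurable GF := by
    rw [hGFdef]
    exact Complex.measurable_ofReal.comp
      ((hh₁meas.comp hψmono.measurable).div (hφ'c.measurable.comp hψmono.measurable))
  have hGFbd : ∀ u, ‖GF u‖ ≤ ((Cg+Cf)/2) / m0 := by
    intro u
    have hmem := hψmem u
    have hposx := hφpos (ψ u)
    show ‖((h₁ (ψ u) / φ' (ψ u) : ℝ) : ℂ)‖ ≤ _
    rw [Complex.norm_real, Real.norm_eq_abs, abs_div, abs_of_pos hposx]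
    exact div_le_div₀ hCC (hC₁ _) hm0pos (hm0le _ hmem)
  -- B n in terms of GF via change of variables
  have hbound : ∀ (n : ℤ) (x : ℝ), ‖(h₁ x : ℂ) * E n x‖ ≤ (Cg+Cf)/2 := by
    intro n x
    rw [norm_mul, hEnorm n x, mul_one, Complex.norm_real, Real.norm_eq_abs]
    exact hC₁ x
  have hint : ∀ (n : ℤ) (c d : ℝ), IntervalIntegrable (fun x => (h₁ x:ℂ) * E n x) volume c d := by
    intro n c d
    rw [intervalIntegrable_iff]
    have hfin : volume (Set.uIoc c d) ≠ ⊤ := by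
      rw [Set.uIoc]; exact measure_Ioc_lt_top.ne
    exact Measure.integrableOn_of_bounded hfin
      ((Complex.measurable_ofReal.comp hh₁meas).mul (hEcont n).measurable).aestronglyMeasurable
      (Filter.Eventually.of_forall (hbound n))
  have hBcov : ∀ n : ℤ, B n = ∫ u in Set.Ioc (φ (-1)) (φ 1),
      Complex.exp (2 * Real.pi * Complex.I * (n:ℂ) * (u:ℂ)) * GF u := by
    intro n
    rw [cov_Ioc φ φ' hφ hφpos]
    have e0 : Set.EqOn (fun x => φ' x • (Complex.exp (2 * Real.pi * Complex.I * (n:ℂ)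
          * ((φ x : ℝ):ℂ)) * GF (φ x))) (fun x => (h₁ x : ℂ) * E n x) (Set.Ioc (-1:ℝ) 1) := by
      intro x hx
      have hIcc : x ∈ Set.Icc (-1:ℝ) 1 := ⟨le_of_lt hx.1, hx.2⟩
      have hGFx : GF (φ x) = ((h₁ x / φ' x : ℝ) : ℂ) := by
        rw [hGFdef]; simp only [hψφ x hIcc]
      have hne : (φ' x : ℂ) ≠ 0 := by
        simp only [ne_eq, Complex.ofReal_eq_zero]; exact (hφpos x).ne'
      show φ' x • (Complex.exp _ * GF (φ x)) = (h₁ x : ℂ) * E n x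
      rw [hGFx, Complex.real_smul]
      have hE : E n x = Complex.exp (2 * Real.pi * Complex.I * (n:ℂ) * ((φ x : ℝ):ℂ)) := rfl
      rw [hE]
      push_cast
      field_simp
    rw [MeasureTheory.setIntegral_congr_fun measurableSet_Ioc e0]
    have e1 : (∫ x in (-1:ℝ)..0, (h₁ x:ℂ) * E n x) = ∫ x in (-1:ℝ)..0, (q' x:ℂ) * E n x := by
      apply intervalIntegral.integral_congr_ae
      filter_upwards [hane] with x hx0 hxmem
      rw [Set.uIoc_of_le (by norm_num : (-1:ℝ) ≤ 0)] at hxmem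
      have hxneg : ¬ (0 ≤ x) := not_le.2 (lt_of_le_of_ne hxmem.2 hx0)
      have e : h₁ x = q' x := by
        show (if 0 ≤ x then p' x else q' x) = q' x
        rw [if_neg hxneg]
      simp only [e]
    have e2 : (∫ x in (0:ℝ)..1, (h₁ x:ℂ) * E n x) = ∫ x in (0:ℝ)..1, (p' x:ℂ) * E n x := by
      apply intervalIntegral.integral_congr
      intro x hx
      rw [Set.uIcc_of_le zero_le_one] at hx
      have e : h₁ x = p' x := by
        show (if 0 ≤ x then p' x else q' x) = p' x
        rw [if_pos hx.1]
      simp only [e]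
    rw [← intervalIntegral.integral_of_le (by norm_num : (-1:ℝ) ≤ 1),
      ← intervalIntegral.integral_add_adjacent_intervals (hint n (-1) 0) (hint n 0 1), e1, e2]
  -- Parseval
  have hpars : (∑' n : ℤ, ‖B n‖^2) = ∫ u in Set.Ioc (φ (-1)) (φ (-1) + 1), ‖GF u‖^2 := by
    rw [← parseval_Ioc (φ (-1)) GF hGFmeas (((Cg+Cf)/2)/m0) hGFbd]
    apply tsum_congr
    intro n
    rw [hBcov n, hb]
  have hJ : (∫ u in Set.Ioc (φ (-1)) (φ (-1) + 1), ‖GF u‖^2)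
      = ∫ x in Set.Ioc (-1:ℝ) 1, (h₁ x)^2 / φ' x := by
    rw [← hb, cov_Ioc φ φ' hφ hφpos (fun u => ‖GF u‖^2)]
    apply MeasureTheory.setIntegral_congr_fun measurableSet_Ioc
    intro x hx
    have hIcc : x ∈ Set.Icc (-1:ℝ) 1 := ⟨le_of_lt hx.1, hx.2⟩
    have hGFx : GF (φ x) = ((h₁ x / φ' x : ℝ) : ℂ) := by
      rw [hGFdef]; simp only [hψφ x hIcc]
    have hne : φ' x ≠ 0 := (hφpos x).ne'
    show φ' x • ‖GF (φ x)‖^2 = (h₁ x)^2 / φ' x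
    rw [hGFx, Complex.norm_real, Real.norm_eq_abs, smul_eq_mul, sq_abs, div_pow]
    field_simp

  -- norm identity
  have hnormB : ∀ n : ℤ, ‖B n‖^2 = 4*Real.pi^2 * ((n:ℝ)^2 * ‖A n‖^2) := by
    intro n
    have h1 : ‖B n‖ = ‖(2 * Real.pi * Complex.I * (n:ℂ)) * A n‖ := by
      rw [key n, norm_neg]
    have h2 : ‖(2 * (Real.pi:ℂ) * Complex.I * (n:ℂ))‖ = 2 * Real.pi * |(n:ℝ)| := by
      have e : ((n:ℂ)) = (((n:ℝ)):ℂ) := by push_cast; rfl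
      rw [e, norm_mul, norm_mul, norm_mul, Complex.norm_I, mul_one, Complex.norm_real,
        Real.norm_eq_abs, Complex.norm_real, Real.norm_eq_abs, abs_of_nonneg Real.pi_pos.le]
      norm_num
    rw [h1, norm_mul, h2, mul_pow, mul_pow, sq_abs]
    ring
  have htsum : (∑' n : ℤ, ‖B n‖^2) = 4*Real.pi^2 * ∑' n : ℤ, (n:ℝ)^2 * ‖A n‖^2 := by
    rw [← tsum_mul_left]
    exact tsum_congr hnormB
  have hkey2 : 4*Real.pi^2 * (∑' n : ℤ, (n:ℝ)^2 * ‖A n‖^2)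
      = ∫ x in Set.Ioc (-1:ℝ) 1, (h₁ x)^2 / φ' x := by
    rw [← htsum, hpars, hJ]
  -- integrability of the real squares
  have hintsq : IntegrableOn (fun x => (h₁ x)^2) (Set.Ioc (-1:ℝ) 1) volume := by
    apply Measure.integrableOn_of_bounded measure_Ioc_lt_top.ne
      (hh₁meas.pow_const 2).aestronglyMeasurable
    apply Filter.Eventually.of_forall
    intro x
    rw [Real.norm_eq_abs, abs_pow]
    exact pow_le_pow_left₀ (abs_nonneg _) (hC₁ x) 2
  have hintJ : IntegrableOn (fun x => (h₁ x)^2 / φ' x) (Set.Ioc (-1:ℝ) 1) volume := by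
    apply Measure.integrableOn_of_bounded (M := ((Cg+Cf)/2)^2 / m0) measure_Ioc_lt_top.ne
      ((hh₁meas.pow_const 2).div hφ'c.measurable).aestronglyMeasurable
    filter_upwards [ae_restrict_mem measurableSet_Ioc] with x hx
    have hIcc : x ∈ Set.Icc (-1:ℝ) 1 := ⟨le_of_lt hx.1, hx.2⟩
    have hposx := hφpos x
    simp only [Real.norm_eq_abs, Pi.div_apply]
    rw [abs_div, abs_of_pos hposx]
    apply div_le_div₀ (by positivity) ?_ hm0pos (hm0le _ hIcc)
    rw [abs_pow]
    exact pow_le_pow_left₀ (abs_nonneg _) (hC₁ x) 2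
  -- comparison with m0 and M0
  have hlow : m0 * (∫ x in Set.Ioc (-1:ℝ) 1, (h₁ x)^2 / φ' x)
      ≤ ∫ x in Set.Ioc (-1:ℝ) 1, (h₁ x)^2 := by
    rw [← MeasureTheory.integral_const_mul]
    apply MeasureTheory.setIntegral_mono_on (hintJ.const_mul m0) hintsq measurableSet_Ioc
    intro x hx
    have hIcc : x ∈ Set.Icc (-1:ℝ) 1 := ⟨le_of_lt hx.1, hx.2⟩
    have hposx := hφpos x
    calc m0 * ((h₁ x)^2/φ' x) ≤ φ' x * ((h₁ x)^2/φ' x) :=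
        mul_le_mul_of_nonneg_right (hm0le x hIcc) (div_nonneg (sq_nonneg _) hposx.le)
      _ = (h₁ x)^2 := by field_simp
  have hhigh : (∫ x in Set.Ioc (-1:ℝ) 1, (h₁ x)^2)
      ≤ M0 * ∫ x in Set.Ioc (-1:ℝ) 1, (h₁ x)^2 / φ' x := by
    rw [← MeasureTheory.integral_const_mul]
    apply MeasureTheory.setIntegral_mono_on hintsq (hintJ.const_mul M0) measurableSet_Ioc
    intro x hx
    have hIcc : x ∈ Set.Icc (-1:ℝ) 1 := ⟨le_of_lt hx.1, hx.2⟩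
    have hposx := hφpos x
    calc (h₁ x)^2 = φ' x * ((h₁ x)^2/φ' x) := by field_simp
      _ ≤ M0 * ((h₁ x)^2/φ' x) :=
        mul_le_mul_of_nonneg_right (hM0ge x hIcc) (div_nonneg (sq_nonneg _) hposx.le)
  -- computing the square integral of h₁
  have hIg2 : IntervalIntegrable (fun x => g' x^2) volume 0 1 := by
    apply ContinuousOn.intervalIntegrable
    rw [Set.uIcc_of_le zero_le_one]
    exact hg'.pow 2
  have hIf2 : IntervalIntegrable (fun x => f x^2) volume 0 1 := by
    apply ContinuousOn.intervalIntegrable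
    rw [Set.uIcc_of_le zero_le_one]
    exact hf.pow 2
  have hIh₁a : IntervalIntegrable (fun x => (h₁ x)^2) volume (-1) 0 := by
    rw [intervalIntegrable_iff]
    apply hintsq.mono_set
    rw [Set.uIoc_of_le (by norm_num : (-1:ℝ) ≤ 0)]
    exact Set.Ioc_subset_Ioc le_rfl zero_le_one
  have hIh₁b : IntervalIntegrable (fun x => (h₁ x)^2) volume 0 1 := by
    rw [intervalIntegrable_iff]
    apply hintsq.mono_set
    rw [Set.uIoc_of_le zero_le_one]
    exact Set.Ioc_subset_Ioc (by norm_num) le_rfl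
  have hT2 : (∫ x in Set.Ioc (-1:ℝ) 1, (h₁ x)^2)
      = ((∫ x in (0:ℝ)..1, g' x^2) + (∫ x in (0:ℝ)..1, f x^2)) / 2 := by
    rw [← intervalIntegral.integral_of_le (by norm_num : (-1:ℝ) ≤ 1),
      ← intervalIntegral.integral_add_adjacent_intervals hIh₁a hIh₁b]
    have hdown : (∫ x in (-1:ℝ)..0, (h₁ x)^2) = ∫ x in (0:ℝ)..1, ((g'c x - fc x)/2)^2 := by
      have e1 : (∫ x in (-1:ℝ)..0, (h₁ x)^2)
          = ∫ x in (-1:ℝ)..0, (fun y => ((g'c y - fc y)/2)^2) (-x) := by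
        apply intervalIntegral.integral_congr_ae
        filter_upwards [hane] with x hx0 hxmem
        rw [Set.uIoc_of_le (by norm_num : (-1:ℝ) ≤ 0)] at hxmem
        have hxneg : ¬ (0 ≤ x) := not_le.2 (lt_of_le_of_ne hxmem.2 hx0)
        have e : h₁ x = q' x := by
          show (if 0 ≤ x then p' x else q' x) = q' x
          rw [if_neg hxneg]
        simp only [e]
        rfl
      rw [e1, intervalIntegral.integral_comp_neg (fun y => ((g'c y - fc y)/2)^2)]
      norm_num
    have hup : (∫ x in (0:ℝ)..1, (h₁ x)^2) = ∫ x in (0:ℝ)..1, ((g'c x + fc x)/2)^2 := by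
      apply intervalIntegral.integral_congr
      intro x hx
      rw [Set.uIcc_of_le zero_le_one] at hx
      have e : h₁ x = p' x := by
        show (if 0 ≤ x then p' x else q' x) = p' x
        rw [if_pos hx.1]
      simp only [e]
      rfl
    rw [hdown, hup]
    have hi1 : IntervalIntegrable (fun x => ((g'c x - fc x)/2)^2) volume 0 1 :=
      (((hg'c_cont.sub hfc_cont).div_const 2).pow 2).intervalIntegrable _ _
    have hi2 : IntervalIntegrable (fun x => ((g'c x + fc x)/2)^2) volume 0 1 :=
      (((hg'c_cont.add hfc_cont).div_const 2).pow 2).intervalIntegrable _ _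
    rw [← intervalIntegral.integral_add hi1 hi2]
    have e2 : (∫ x in (0:ℝ)..1, (((g'c x - fc x)/2)^2 + ((g'c x + fc x)/2)^2))
        = ∫ x in (0:ℝ)..1, (g' x^2 + f x^2)/2 := by
      apply intervalIntegral.integral_congr
      intro x hx
      rw [Set.uIcc_of_le zero_le_one] at hx
      simp only [hg'c_eq x hx, hfc_eq x hx]
      ring
    rw [e2, intervalIntegral.integral_div, intervalIntegral.integral_add hIg2 hIf2]
  constructor
  · have h1 : m0 * (4*Real.pi^2 * (∑' n : ℤ, (n:ℝ)^2 * ‖A n‖^2))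
        ≤ ((∫ x in (0:ℝ)..1, g' x^2) + (∫ x in (0:ℝ)..1, f x^2)) / 2 := by
      rw [hkey2, ← hT2]; exact hlow
    nlinarith [h1]
  · have h2 : ((∫ x in (0:ℝ)..1, g' x^2) + (∫ x in (0:ℝ)..1, f x^2)) / 2
        ≤ M0 * (4*Real.pi^2 * (∑' n : ℤ, (n:ℝ)^2 * ‖A n‖^2)) := by
      rw [hkey2, ← hT2]; exact hhigh
    nlinarith [h2]
end

section
/- Let ℓ > 1 and let γ : [−1,∞) → [1,∞) be a C¹ strictly increasing bijection with γ(−1) = 1, γ(x) > x, and γ'(x) = ℓ + O(x^{−δ}) as x → ∞ for some δ > 0. Then Abel's equation φ ∘ γ = φ + 1 admits a strictly increasing C¹ solution φ : [−1,∞) → ℝ. -/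
open Real Set Filter Asymptotics Topology

set_option maxHeartbeats 2000000 in
theorem abel_equation_solution_expansive
    (ℓ δ : ℝ) (hℓ : 1 < ℓ) (hδ : 0 < δ)
    (γ γ' : ℝ → ℝ)
    (hγderiv : ∀ x ∈ Ici (-1:ℝ), HasDerivAt γ (γ' x) x)
    (hγ'cont : ContinuousOn γ' (Ici (-1:ℝ)))
    (hmono : StrictMonoOn γ (Ici (-1:ℝ)))
    (himg : γ '' Ici (-1:ℝ) = Ici (1:ℝ))
    (hγm1 : γ (-1) = 1)
    (hfix : ∀ x ∈ Ici (-1:ℝ), x < γ x)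
    (hasymp : (fun x => γ' x - ℓ) =O[atTop] fun x : ℝ => x ^ (-δ)) :
    ∃ φ φ' : ℝ → ℝ,
      StrictMonoOn φ (Ici (-1:ℝ)) ∧
      (∀ x ∈ Ici (-1:ℝ), HasDerivAt φ (φ' x) x) ∧
      ContinuousOn φ' (Ici (-1:ℝ)) ∧
      ∀ x ∈ Ici (-1:ℝ), φ (γ x) = φ x + 1 := by
  have hℓ0 : (0:ℝ) < ℓ := by linarith
  have hγcont : ContinuousOn γ (Ici (-1:ℝ)) := fun x hx =>
    (hγderiv x hx).continuousAt.continuousWithinAt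
  have hmaps : MapsTo γ (Ici (-1:ℝ)) (Ici (-1:ℝ)) := by
    intro x hx
    have h1 : γ x ∈ Ici (1:ℝ) := himg ▸ mem_image_of_mem γ hx
    have : (-1:ℝ) ≤ 1 := by norm_num
    exact le_trans this h1
  have hiter_mem : ∀ n, ∀ x ∈ Ici (-1:ℝ), γ^[n] x ∈ Ici (-1:ℝ) :=
    fun n x hx => hmaps.iterate n hx
  have hiter_cont : ∀ n, ContinuousOn (γ^[n]) (Ici (-1:ℝ)) := by
    intro n
    induction n with
    | zero => simpa using continuousOn_id
    | succ n ih =>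
      rw [Function.iterate_succ']
      exact hγcont.comp ih (hmaps.iterate n)
  have hiter_mono : ∀ n, StrictMonoOn (γ^[n]) (Ici (-1:ℝ)) := by
    intro n
    induction n with
    | zero => simpa using strictMonoOn_id
    | succ n ih =>
      rw [Function.iterate_succ']
      exact hmono.comp ih (hmaps.iterate n)
  -- the orbit of -1
  set a : ℕ → ℝ := fun n => γ^[n] (-1) with ha_def
  have ha_mem : ∀ n, a n ∈ Ici (-1:ℝ) := fun n => hiter_mem n (-1) (by norm_num)
  have ha_succ : ∀ n, a (n + 1) = γ (a n) := by
    intro n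
    simp only [ha_def]
    rw [Function.iterate_succ_apply']
  have ha_lt : ∀ n, a n < a (n + 1) := by
    intro n; rw [ha_succ]; exact hfix _ (ha_mem n)
  have ha_mono : StrictMono a := strictMono_nat_of_lt_succ ha_lt
  have hatop : Tendsto a atTop atTop := by
    rcases tendsto_of_monotone ha_mono.monotone with h | ⟨L, hL⟩
    · exact h
    · exfalso
      have haL : ∀ n, a n ≤ L := fun n => ha_mono.monotone.ge_of_tendsto hL n
      have hLmem : L ∈ Ici (-1:ℝ) := le_trans (ha_mem 0) (haL 0)
      have h1 : Tendsto (fun n => γ (a n)) atTop (𝓝 (γ L)) := by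
        have : Tendsto a atTop (𝓝[Ici (-1:ℝ)] L) :=
          tendsto_nhdsWithin_of_tendsto_nhds_of_eventually_within a hL
            (Eventually.of_forall ha_mem)
        exact (hγcont L hLmem).tendsto.comp this
      have h2 : Tendsto (fun n => γ (a n)) atTop (𝓝 L) := by
        have : Tendsto (fun n => a (n + 1)) atTop (𝓝 L) :=
          hL.comp (tendsto_add_atTop_nat 1)
        simpa [ha_succ] using this
      have : γ L = L := tendsto_nhds_unique h1 h2
      exact absurd this (ne_of_gt (hfix L hLmem))
  -- asymptotic bound constants
  obtain ⟨K₀, hK₀⟩ := hasymp.bound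
  set K := |K₀| with hK_def
  have hK0 : 0 ≤ K := abs_nonneg _
  have hK : ∀ᶠ y in atTop, |γ' y - ℓ| ≤ K * y ^ (-δ) := by
    filter_upwards [hK₀, eventually_ge_atTop (1:ℝ)] with y hy hy1
    have hyp : 0 < y ^ (-δ) := Real.rpow_pos_of_pos (by linarith) _
    calc |γ' y - ℓ| = ‖γ' y - ℓ‖ := (Real.norm_eq_abs _).symm
      _ ≤ K₀ * ‖y ^ (-δ)‖ := hy
      _ ≤ K * y ^ (-δ) := by
          rw [Real.norm_eq_abs, abs_of_pos hyp]
          exact mul_le_mul_of_nonneg_right (le_abs_self _) hyp.le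
  set r : ℝ := (1 + ℓ) / 2 with hr_def
  have hr1 : 1 < r := by rw [hr_def]; linarith
  have hrℓ : r < ℓ := by rw [hr_def]; linarith
  have hsmall : ∀ᶠ y in atTop, K * y ^ (-δ) ≤ ℓ - r := by
    have h0 : Tendsto (fun y : ℝ => K * y ^ (-δ)) atTop (𝓝 (K * 0)) :=
      (tendsto_rpow_neg_atTop hδ).const_mul K
    rw [mul_zero] at h0
    exact h0.eventually_le_const (by linarith)
  obtain ⟨M, hM⟩ := (hK.and (hsmall.and (eventually_ge_atTop (1:ℝ)))).exists_forall_of_atTop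
  have hM1 : (1:ℝ) ≤ M := (hM M le_rfl).2.2
  have hγ'ge : ∀ y, M ≤ y → r ≤ γ' y := by
    intro y hy
    have h1 := (hM y hy).1
    have h2 := (hM y hy).2.1
    have := abs_le.mp (h1.trans h2)
    linarith [this.1]
  -- growth estimate
  have hgrow : ∀ x, M ≤ x → r * x + (γ M - r * M) ≤ γ x := by
    intro x hx
    rcases eq_or_lt_of_le hx with rfl | hx'
    · ring_nf; exact le_rfl
    · have hMm : M ∈ Ici (-1:ℝ) := by simp only [mem_Ici]; linarith
      have hsub : Icc M x ⊆ Ici (-1:ℝ) := fun y hy => le_trans (by linarith) hy.1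
      obtain ⟨c, hc, hslope⟩ := exists_hasDerivAt_eq_slope γ γ' hx'
        (hγcont.mono hsub) (fun y hy => hγderiv y (hsub (Ioo_subset_Icc_self hy)))
      have hcM : M ≤ c := hc.1.le
      have hrc : r ≤ γ' c := hγ'ge c hcM
      rw [hslope] at hrc
      have hxM : 0 < x - M := by linarith
      rw [le_div_iff₀ hxM] at hrc
      linarith
  set s : ℝ := (1 + r) / 2 with hs_def
  have hs1 : 1 < s := by rw [hs_def]; linarith
  have hsr : s < r := by rw [hs_def]; linarith
  have hs0 : (0:ℝ) < s := by linarith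
  set M₃ : ℝ := max M (max 1 ((r * M - γ M) / (r - s))) with hM₃_def
  have hM₃M : M ≤ M₃ := le_max_left _ _
  have hM₃1 : (1:ℝ) ≤ M₃ := le_trans (le_max_left _ _) (le_max_right _ _)
  have hgrow' : ∀ x, M₃ ≤ x → s * x ≤ γ x := by
    intro x hx
    have h1 := hgrow x (le_trans hM₃M hx)
    have h2 : (r * M - γ M) / (r - s) ≤ x :=
      le_trans (le_trans (le_max_right _ _) (le_max_right _ _)) hx
    rw [div_le_iff₀ (by linarith : (0:ℝ) < r - s)] at h2
    nlinarith
  obtain ⟨N₀, hN₀⟩ := (hatop.eventually_ge_atTop M₃).exists_forall_of_atTop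
  have hgeom : ∀ k, s ^ k * M₃ ≤ a (N₀ + k) := by
    intro k
    induction k with
    | zero => simpa using hN₀ N₀ le_rfl
    | succ k ih =>
      have hsk1 : (1:ℝ) ≤ s ^ k := one_le_pow₀ hs1.le
      have hM₃le : M₃ ≤ a (N₀ + k) := by nlinarith
      have : s * a (N₀ + k) ≤ γ (a (N₀ + k)) := hgrow' _ hM₃le
      have h2 : a (N₀ + (k + 1)) = γ (a (N₀ + k)) := by
        rw [show N₀ + (k+1) = (N₀ + k) + 1 by ring, ha_succ]
      rw [h2, pow_succ]
      nlinarith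
  set ρ : ℝ := s ^ (-δ) with hρ_def
  have hρ0 : 0 < ρ := Real.rpow_pos_of_pos hs0 _
  have hρ1 : ρ < 1 := Real.rpow_lt_one_of_one_lt_of_neg hs1 (by linarith)
  -- uniform tail bound
  have htail : ∀ k, ∀ x ∈ Ici (-1:ℝ), |γ' (γ^[N₀ + k] x) - ℓ| ≤ K * ρ ^ k := by
    intro k x hx
    have hax : a (N₀ + k) ≤ γ^[N₀ + k] x :=
      (hiter_mono (N₀ + k)).monotoneOn (by norm_num) hx hx
    have hy1 : s ^ k * M₃ ≤ γ^[N₀ + k] x := le_trans (hgeom k) hax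
    have hsk0 : (0:ℝ) < s ^ k * M₃ := by positivity
    have hyM : M ≤ γ^[N₀ + k] x := by
      have hsk1 : (1:ℝ) ≤ s ^ k := one_le_pow₀ hs1.le
      nlinarith
    have h1 := (hM _ hyM).1
    have h2 : (γ^[N₀ + k] x) ^ (-δ) ≤ (s ^ k * M₃) ^ (-δ) :=
      Real.rpow_le_rpow_of_nonpos hsk0 hy1 (by linarith)
    have h3 : (s ^ k * M₃) ^ (-δ) ≤ ρ ^ k := by
      rw [Real.mul_rpow (by positivity) (by linarith)]
      have hsk : (s ^ k : ℝ) ^ (-δ) = ρ ^ k := by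
        rw [← Real.rpow_natCast s k, ← Real.rpow_natCast ρ k, hρ_def,
          ← Real.rpow_mul hs0.le, ← Real.rpow_mul hs0.le, mul_comm]
      rw [hsk]
      have : M₃ ^ (-δ) ≤ 1 :=
        Real.rpow_le_one_of_one_le_of_nonpos hM₃1 (by linarith)
      nlinarith [pow_pos hρ0 k]
    calc |γ' (γ^[N₀ + k] x) - ℓ| ≤ K * (γ^[N₀ + k] x) ^ (-δ) := h1
      _ ≤ K * ρ ^ k := by nlinarith
  -- choose N₁ so that the tail terms are within 1/2 of 1
  have hN₁ex : ∀ᶠ n in atTop, (K / ℓ) * ρ ^ n ≤ 1 / 2 := by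
    have h0 : Tendsto (fun n : ℕ => (K / ℓ) * ρ ^ n) atTop (𝓝 ((K / ℓ) * 0)) :=
      (tendsto_pow_atTop_nhds_zero_of_lt_one hρ0.le hρ1).const_mul _
    rw [mul_zero] at h0
    exact h0.eventually_le_const (by norm_num)
  obtain ⟨N₁, hN₁⟩ := hN₁ex.exists_forall_of_atTop
  set N : ℕ := N₀ + N₁ with hN_def
  set t : ℕ → ℝ → ℝ := fun n x => γ' (γ^[n] x) / ℓ with ht_def
  have ht_bound : ∀ j, ∀ x ∈ Ici (-1:ℝ), |t (N + j) x - 1| ≤ (1 / 2) * ρ ^ j := by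
    intro j x hx
    have h1 : |γ' (γ^[N₀ + (N₁ + j)] x) - ℓ| ≤ K * ρ ^ (N₁ + j) := htail (N₁ + j) x hx
    have h2 : N + j = N₀ + (N₁ + j) := by rw [hN_def]; ring
    have h3 : |t (N + j) x - 1| = |γ' (γ^[N + j] x) - ℓ| / ℓ := by
      simp only [ht_def]
      rw [show γ' (γ^[N + j] x) / ℓ - 1 = (γ' (γ^[N + j] x) - ℓ) / ℓ by field_simp,
        abs_div, abs_of_pos hℓ0]
    rw [h3, h2, div_le_iff₀ hℓ0]
    have h5 := hN₁ N₁ le_rfl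
    rw [div_mul_eq_mul_div, div_le_iff₀ hℓ0] at h5
    have hρj : (0:ℝ) ≤ ρ ^ j := (pow_pos hρ0 j).le
    have h6 : K * ρ ^ (N₁ + j) ≤ (1 / 2 * ℓ) * ρ ^ j := by
      rw [pow_add, ← mul_assoc]
      exact mul_le_mul_of_nonneg_right h5 hρj
    refine h1.trans (h6.trans (le_of_eq (by ring)))
  have ht_half : ∀ j, ∀ x ∈ Ici (-1:ℝ), 1 / 2 ≤ t (N + j) x ∧ t (N + j) x ≤ 3 / 2 := by
    intro j x hx
    have h1 := ht_bound j x hx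
    have hρj : ρ ^ j ≤ 1 := pow_le_one₀ hρ0.le hρ1.le
    have := abs_le.mp h1
    constructor <;> linarith [this.1, this.2]
  -- the log-tail series
  set u : ℕ → ℝ → ℝ := fun j x => Real.log (t (N + j) x) with hu_def
  have hloglem : ∀ y : ℝ, 1 / 2 ≤ y → |Real.log y| ≤ 2 * |y - 1| := by
    intro y hy
    have hy0 : 0 < y := by linarith
    rcases le_or_gt 1 y with h | h
    · have h1 : 0 ≤ Real.log y := Real.log_nonneg h
      have h2 : Real.log y ≤ y - 1 := Real.log_le_sub_one_of_pos hy0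
      rw [abs_of_nonneg h1, abs_of_nonneg (by linarith : (0:ℝ) ≤ y - 1)]
      linarith
    · have h1 : Real.log y ≤ 0 := Real.log_nonpos hy0.le h.le
      have h2 : Real.log y⁻¹ ≤ y⁻¹ - 1 :=
        Real.log_le_sub_one_of_pos (by positivity)
      rw [Real.log_inv] at h2
      have h3 : y⁻¹ ≤ 2 := by
        rw [inv_le_comm₀ hy0 (by norm_num)]; linarith
      rw [abs_of_nonpos h1, abs_of_nonpos (by linarith : y - 1 ≤ 0)]
      have h4 : y * y⁻¹ = 1 := mul_inv_cancel₀ (ne_of_gt hy0)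
      nlinarith
  have hu_bound : ∀ j, ∀ x ∈ Ici (-1:ℝ), |u j x| ≤ ρ ^ j := by
    intro j x hx
    have h1 := (ht_half j x hx).1
    have h2 := ht_bound j x hx
    calc |u j x| ≤ 2 * |t (N + j) x - 1| := hloglem _ h1
      _ ≤ 2 * ((1/2) * ρ ^ j) := by nlinarith [abs_nonneg (t (N+j) x - 1)]
      _ = ρ ^ j := by ring
  have hgeo_sum : Summable fun j : ℕ => ρ ^ j :=
    summable_geometric_of_lt_one hρ0.le hρ1
  have hu_summable : ∀ x ∈ Ici (-1:ℝ), Summable fun j => u j x := by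
    intro x hx
    exact Summable.of_norm_bounded hgeo_sum
      (fun j => by rw [Real.norm_eq_abs]; exact hu_bound j x hx)
  set S : ℝ → ℝ := fun x => ∑' j, u j x with hS_def
  have ht_cont : ∀ n, ContinuousOn (fun x => t n x) (Ici (-1:ℝ)) := by
    intro n
    exact (hγ'cont.comp (hiter_cont n) (hmaps.iterate n)).div_const ℓ
  have hScont : ContinuousOn S (Ici (-1:ℝ)) := by
    apply continuousOn_tsum (u := fun j : ℕ => ρ ^ j)
    · intro j
      apply ContinuousOn.log (ht_cont (N + j))
      intro x hx
      have := (ht_half j x hx).1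
      linarith
    · exact hgeo_sum
    · intro j x hx
      rw [Real.norm_eq_abs]; exact hu_bound j x hx
  have ht_shift : ∀ n x, t n (γ x) = t (n + 1) x := by
    intro n x
    simp only [ht_def]
    rw [← Function.iterate_succ_apply]
  have hS_shift : ∀ x ∈ Ici (-1:ℝ), S (γ x) = S x - u 0 x := by
    intro x hx
    have h1 : ∀ j, u j (γ x) = u (j + 1) x := by
      intro j
      simp only [hu_def]
      rw [ht_shift]
      norm_num [add_assoc]
    have h2 : S x = u 0 x + ∑' j, u (j + 1) x := Summable.tsum_eq_zero_add (hu_summable x hx)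
    have h3 : S (γ x) = ∑' j, u (j + 1) x := by
      simp only [hS_def]
      exact tsum_congr h1
    rw [h3, h2]; ring
  -- nonnegativity of the derivative
  have hγ'nonneg : ∀ x ∈ Ici (-1:ℝ), 0 ≤ γ' x := by
    intro x hx
    have hd : HasDerivWithinAt γ (γ' x) (Ioi x) x := (hγderiv x hx).hasDerivWithinAt
    rw [hasDerivWithinAt_iff_tendsto_slope,
      Set.diff_singleton_eq_self (notMem_Ioi.mpr le_rfl)] at hd
    refine ge_of_tendsto hd ?_
    filter_upwards [self_mem_nhdsWithin] with y hy
    have hyx : x < y := hy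
    have hymem : y ∈ Ici (-1:ℝ) := le_trans (le_trans hx hyx.le) le_rfl
    rw [slope_def_field]
    have := hmono hx hymem hyx
    have h2 : 0 < y - x := by linarith
    rw [div_eq_mul_inv]
    exact mul_nonneg (by linarith) (by positivity)
  have ht_nonneg : ∀ n, ∀ x ∈ Ici (-1:ℝ), 0 ≤ t n x := by
    intro n x hx
    simp only [ht_def]
    exact div_nonneg (hγ'nonneg _ (hiter_mem n x hx)) hℓ0.le
  set P : ℝ → ℝ := fun x => (∏ n ∈ Finset.range N, t n x) * Real.exp (S x) with hP_def
  have hPnonneg : ∀ x ∈ Ici (-1:ℝ), 0 ≤ P x := by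
    intro x hx
    apply mul_nonneg (Finset.prod_nonneg fun n _ => ht_nonneg n x hx) (Real.exp_pos _).le
  have hPcont : ContinuousOn P (Ici (-1:ℝ)) := by
    apply ContinuousOn.mul
    · exact continuousOn_finset_prod _ fun n _ => ht_cont n
    · exact Real.continuous_exp.comp_continuousOn hScont
  have htN_pos : ∀ x ∈ Ici (-1:ℝ), 0 < t N x := by
    intro x hx
    have := (ht_half 0 x hx).1
    simp only [Nat.add_zero] at this
    linarith
  -- the functional equation for P
  have hPfe : ∀ x ∈ Ici (-1:ℝ), P (γ x) * γ' x = ℓ * P x := by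
    intro x hx
    have hγx : γ x ∈ Ici (-1:ℝ) := hmaps hx
    have hu0 : Real.exp (u 0 x) = t N x := by
      simp only [hu_def, Nat.add_zero]
      exact Real.exp_log (htN_pos x hx)
    have hexp : Real.exp (S (γ x)) * t N x = Real.exp (S x) := by
      rw [hS_shift x hx, Real.exp_sub, ← hu0]
      field_simp
    have hfin : (∏ n ∈ Finset.range N, t n (γ x)) * t 0 x
        = (∏ n ∈ Finset.range N, t n x) * t N x := by
      have e1 : (∏ n ∈ Finset.range N, t n (γ x)) = ∏ n ∈ Finset.range N, t (n + 1) x :=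
        Finset.prod_congr rfl fun n _ => ht_shift n x
      rw [e1, ← Finset.prod_range_succ' (fun n => t n x) N,
        Finset.prod_range_succ (fun n => t n x) N]
    have hγ'eq : γ' x = t 0 x * ℓ := by
      simp only [ht_def, Function.iterate_zero_apply]
      field_simp
    simp only [hP_def]
    rw [hγ'eq]
    linear_combination (ℓ * Real.exp (S (γ x))) * hfin
      + (ℓ * (∏ n ∈ Finset.range N, t n x)) * hexp
  -- the clamped density and its antiderivative
  set Q : ℝ → ℝ := fun x => P (max x (-1)) with hQ_def
  have hQeq : ∀ x ∈ Ici (-1:ℝ), Q x = P x := by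
    intro x hx
    simp only [hQ_def]
    rw [max_eq_left hx]
  have hQcont : Continuous Q := by
    apply hPcont.comp_continuous (continuous_id.max continuous_const)
    intro x
    exact mem_Ici.mpr (le_max_right _ _)
  have hQnonneg : ∀ x, 0 ≤ Q x := fun x => hPnonneg _ (mem_Ici.mpr (le_max_right _ _))
  have hQint : ∀ a b : ℝ, IntervalIntegrable Q MeasureTheory.volume a b :=
    fun a b => hQcont.intervalIntegrable a b
  set I : ℝ := ∫ x in (-1:ℝ)..1, Q x with hI_def
  set C : ℝ := I / (ℓ - 1) with hC_def
  set ψ : ℝ → ℝ := fun x => (∫ s in (-1:ℝ)..x, Q s) + C with hψ_def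
  have hψderiv : ∀ x : ℝ, HasDerivAt ψ (Q x) x := by
    intro x
    have h1 : HasDerivAt (fun y => ∫ s in (-1:ℝ)..y, Q s) (Q x) x :=
      intervalIntegral.integral_hasDerivAt_right (hQint _ _)
        (hQcont.stronglyMeasurableAtFilter _ _) hQcont.continuousAt
    simpa only [hψ_def] using h1.add_const C
  -- shrinking lemma: inside any interval we can find a subinterval on which
  -- γ' ∘ γ^[n] is positive
  have hshrink : ∀ (n : ℕ) (c d : ℝ), -1 ≤ c → c < d →
      ∃ c' d', c ≤ c' ∧ c' < d' ∧ d' ≤ d ∧ ∀ x ∈ Icc c' d', 0 < γ' (γ^[n] x) := by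
    intro n c d hc hcd
    have hcm : c ∈ Ici (-1:ℝ) := hc
    have hdm : d ∈ Ici (-1:ℝ) := le_trans hc hcd.le
    have hsub : Icc c d ⊆ Ici (-1:ℝ) := fun y hy => le_trans hc hy.1
    have hcd' : γ^[n] c < γ^[n] d := hiter_mono n hcm hdm hcd
    have hsubn : Icc (γ^[n] c) (γ^[n] d) ⊆ Ici (-1:ℝ) :=
      fun y hy => le_trans (hiter_mem n c hcm) hy.1
    obtain ⟨ξ, hξ, hslope⟩ := exists_hasDerivAt_eq_slope γ γ' hcd'
      (hγcont.mono hsubn) (fun y hy => hγderiv y (hsubn (Ioo_subset_Icc_self hy)))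
    have hξpos : 0 < γ' ξ := by
      rw [hslope]
      have h1 : γ (γ^[n] c) < γ (γ^[n] d) :=
        hmono (hiter_mem n c hcm) (hiter_mem n d hdm) hcd'
      apply div_pos <;> linarith [hξ.1, hξ.2]
    have hIVT : Icc (γ^[n] c) (γ^[n] d) ⊆ γ^[n] '' Icc c d :=
      intermediate_value_Icc hcd.le ((hiter_cont n).mono hsub)
    obtain ⟨x₁, hx₁, hx₁eq⟩ := hIVT (Ioo_subset_Icc_self hξ)
    have hx₁o : x₁ ∈ Ioo c d := by
      constructor
      · rcases eq_or_lt_of_le hx₁.1 with h | h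
        · exfalso; rw [← h] at hx₁eq; rw [← hx₁eq] at hξ; exact lt_irrefl _ hξ.1
        · exact h
      · rcases eq_or_lt_of_le hx₁.2 with h | h
        · exfalso; rw [h] at hx₁eq; rw [← hx₁eq] at hξ; exact lt_irrefl _ hξ.2
        · exact h
    have hcontAt : ContinuousAt (fun x => γ' (γ^[n] x)) x₁ := by
      have h1 : ContinuousOn (fun x => γ' (γ^[n] x)) (Ioo c d) :=
        (hγ'cont.comp (hiter_cont n) (hmaps.iterate n)).mono
          (fun y hy => le_trans hc hy.1.le)
      exact h1.continuousAt (isOpen_Ioo.mem_nhds hx₁o)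
    have hx₁pos : 0 < γ' (γ^[n] x₁) := by rw [hx₁eq]; exact hξpos
    have hev : ∀ᶠ y in 𝓝 x₁, 0 < γ' (γ^[n] y) ∧ y ∈ Ioo c d := by
      have h1 : ∀ᶠ y in 𝓝 x₁, γ' (γ^[n] y) ∈ Ioi 0 :=
        hcontAt.eventually_mem (Ioi_mem_nhds hx₁pos)
      have h2 : ∀ᶠ y in 𝓝 x₁, y ∈ Ioo c d :=
        eventually_of_mem (isOpen_Ioo.mem_nhds hx₁o) (fun y hy => hy)
      exact h1.and h2
    obtain ⟨ε, hε, hball⟩ := Metric.eventually_nhds_iff.mp hev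
    refine ⟨x₁ - ε / 2, x₁ + ε / 2, ?_, by linarith, ?_, ?_⟩
    · have := (hball (by rw [Real.dist_eq]; rw [abs_of_nonpos] <;> [skip; linarith]
        <;> linarith : dist (x₁ - ε / 2) x₁ < ε)).2.1
      linarith
    · have := (hball (by rw [Real.dist_eq]; rw [abs_of_nonneg] <;> linarith :
        dist (x₁ + ε / 2) x₁ < ε)).2.2
      linarith
    · intro x hx
      have hd : dist x x₁ < ε := by
        rw [Real.dist_eq, abs_lt]
        constructor <;> [linarith [hx.1]; linarith [hx.2]]
      exact (hball hd).1
  have hshrinkN : ∀ (m : ℕ) (c d : ℝ), -1 ≤ c → c < d →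
      ∃ c' d', c ≤ c' ∧ c' < d' ∧ d' ≤ d ∧
        ∀ x ∈ Icc c' d', ∀ n < m, 0 < γ' (γ^[n] x) := by
    intro m
    induction m with
    | zero =>
      intro c d hc hcd
      exact ⟨c, d, le_rfl, hcd, le_rfl, fun x _ n hn => absurd hn (Nat.not_lt_zero n)⟩
    | succ m ih =>
      intro c d hc hcd
      obtain ⟨c₁, d₁, hc₁, hcd₁, hd₁, hall₁⟩ := ih c d hc hcd
      obtain ⟨c₂, d₂, hc₂, hcd₂, hd₂, hall₂⟩ := hshrink m c₁ d₁ (le_trans hc hc₁) hcd₁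
      refine ⟨c₂, d₂, le_trans hc₁ hc₂, hcd₂, le_trans hd₂ hd₁, ?_⟩
      intro x hx n hn
      rcases Nat.lt_succ_iff_lt_or_eq.mp hn with h | rfl
      · exact hall₁ x ⟨le_trans hc₂ hx.1, le_trans hx.2 hd₂⟩ n h
      · exact hall₂ x hx
  -- strict positivity of integrals of Q
  have hint_pos : ∀ p q : ℝ, -1 ≤ p → p < q → 0 < ∫ x in p..q, Q x := by
    intro p q hp hpq
    obtain ⟨c', d', hc', hcd', hd', hall⟩ := hshrinkN N p q hp hpq
    have hQpos : ∀ x ∈ Icc c' d', 0 < Q x := by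
      intro x hx
      have hxm : x ∈ Ici (-1:ℝ) := le_trans hp (le_trans hc' hx.1)
      rw [hQeq x hxm]
      simp only [hP_def]
      apply mul_pos _ (Real.exp_pos _)
      apply Finset.prod_pos
      intro n hn
      simp only [ht_def]
      exact div_pos (hall x hx n (Finset.mem_range.mp hn)) hℓ0
    have h1 : 0 < ∫ x in c'..d', Q x :=
      intervalIntegral.intervalIntegral_pos_of_pos_on (hQint _ _)
        (fun x hx => hQpos x (Ioo_subset_Icc_self hx)) hcd'
    have h2 : 0 ≤ ∫ x in p..c', Q x :=
      intervalIntegral.integral_nonneg hc' (fun x _ => hQnonneg x)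
    have h3 : 0 ≤ ∫ x in d'..q, Q x :=
      intervalIntegral.integral_nonneg hd' (fun x _ => hQnonneg x)
    have hsplit : ∫ x in p..q, Q x
        = ((∫ x in p..c', Q x) + (∫ x in c'..d', Q x)) + (∫ x in d'..q, Q x) := by
      rw [intervalIntegral.integral_add_adjacent_intervals (hQint p c') (hQint c' d'),
        intervalIntegral.integral_add_adjacent_intervals (hQint p d') (hQint d' q)]
    rw [hsplit]; linarith
  have hψdiff : ∀ p q : ℝ, ψ q - ψ p = ∫ x in p..q, Q x := by
    intro p q
    simp only [hψ_def]
    rw [add_sub_add_right_eq_sub,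
      ← intervalIntegral.integral_interval_sub_left (hQint (-1) q) (hQint (-1) p)]
  have hψmono : StrictMonoOn ψ (Ici (-1:ℝ)) := by
    intro p hp q hq hpq
    have h1 := hint_pos p q hp hpq
    have h2 := hψdiff p q
    linarith
  have hI0 : 0 < I := hint_pos (-1) 1 le_rfl (by norm_num)
  have hC0 : 0 < C := by rw [hC_def]; exact div_pos hI0 (by linarith)
  have hψm1 : ψ (-1) = C := by
    simp only [hψ_def, intervalIntegral.integral_same, zero_add]
  have hψpos : ∀ x ∈ Ici (-1:ℝ), 0 < ψ x := by
    intro x hx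
    rcases eq_or_lt_of_le (mem_Ici.mp hx : (-1:ℝ) ≤ x) with h | h
    · rw [← h, hψm1]; exact hC0
    · have := hψmono (mem_Ici.mpr le_rfl) hx h
      rw [hψm1] at this
      linarith
  -- Schröder equation for ψ
  have hSch : ∀ x ∈ Ici (-1:ℝ), ψ (γ x) = ℓ * ψ x := by
    intro x hx
    have huIcc : uIcc (-1:ℝ) x = Icc (-1) x := uIcc_of_le hx
    have hsub : Icc (-1:ℝ) x ⊆ Ici (-1:ℝ) := fun y hy => hy.1
    have hsubst : (∫ y in (-1:ℝ)..x, γ' y • (Q ∘ γ) y) = ∫ y in γ (-1)..γ x, Q y :=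
      intervalIntegral.integral_comp_smul_deriv
        (fun y hy => hγderiv y (hsub (huIcc ▸ hy)))
        (hγ'cont.mono (huIcc ▸ hsub)) hQcont
    have hcongr : EqOn (fun y => γ' y • (Q ∘ γ) y) (fun y => ℓ * Q y) (uIcc (-1:ℝ) x) := by
      intro y hy
      have hym : y ∈ Ici (-1:ℝ) := hsub (huIcc ▸ hy)
      simp only [smul_eq_mul, Function.comp_apply]
      rw [hQeq (γ y) (hmaps hym), hQeq y hym, mul_comm (γ' y)]
      exact hPfe y hym
    have h2 : ℓ * (∫ y in (-1:ℝ)..x, Q y) = ∫ y in γ (-1)..γ x, Q y := by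
      rw [← intervalIntegral.integral_const_mul, ← hsubst]
      exact intervalIntegral.integral_congr hcongr.symm
    have h4 : (∫ y in (1:ℝ)..γ x, Q y) = ℓ * ∫ y in (-1:ℝ)..x, Q y := by
      rw [h2, hγm1]
    have h5 : (∫ y in (-1:ℝ)..γ x, Q y) = I + ℓ * ∫ y in (-1:ℝ)..x, Q y := by
      rw [← intervalIntegral.integral_add_adjacent_intervals (hQint (-1) 1) (hQint 1 (γ x)),
        h4, hI_def]
    have hIC : I = (ℓ - 1) * C := by
      rw [hC_def, ← mul_div_assoc,
        mul_div_cancel_left₀ _ (by linarith : ℓ - 1 ≠ 0)]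
    simp only [hψ_def]
    linear_combination h5 + hIC
  -- assemble the solution
  have hlogℓ : 0 < Real.log ℓ := Real.log_pos hℓ
  have hψcont : ContinuousOn ψ (Ici (-1:ℝ)) :=
    fun x _ => (hψderiv x).continuousAt.continuousWithinAt
  refine ⟨fun x => Real.log (ψ x) / Real.log ℓ,
    fun x => Q x / (ψ x * Real.log ℓ), ?_, ?_, ?_, ?_⟩
  · intro p hp q hq hpq
    have h1 : Real.log (ψ p) < Real.log (ψ q) :=
      Real.log_lt_log (hψpos p hp) (hψmono hp hq hpq)
    exact (div_lt_div_iff_of_pos_right hlogℓ).mpr h1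
  · intro x hx
    have h1 := ((hψderiv x).log (ne_of_gt (hψpos x hx))).div_const (Real.log ℓ)
    simpa [div_div] using h1
  · apply ContinuousOn.div hQcont.continuousOn
    · exact hψcont.mul continuousOn_const
    · intro x hx
      exact mul_ne_zero (ne_of_gt (hψpos x hx)) (ne_of_gt hlogℓ)
  · intro x hx
    simp only []
    rw [hSch x hx, Real.log_mul (ne_of_gt hℓ0) (ne_of_gt (hψpos x hx))]
    field_simp
    ring
end

section
/- Under the asymptotics γ'(x) = 1 + a(1−δ)x^{−δ} + o(x^{−δ}) with a > 0, δ > 0, δ ≠ 1, and γ strictly increasing with γ(−1) = 1 and γ(x) > x, Abel's equation φ(γ(x)) = φ(x) + 1 has a strictly positive, strictly increasing C¹ solution φ on [−1,∞). -/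
open Real Set Filter Asymptotics Topology

noncomputable def abelT (γ : ℝ → ℝ) (n : ℕ) : ℝ := γ^[n] (-1)

noncomputable def abelInv (γ : ℝ → ℝ) (x : ℝ) : ℝ :=
  if x < 1 then x - 2 else sSup {y | -1 ≤ y ∧ γ y ≤ x}

noncomputable def abelG (γ γ' : ℝ → ℝ) (n : ℕ) (y : ℝ) : ℝ :=
  ∏ k ∈ Finset.range n, γ' (γ^[k] y)

noncomputable def abelU (γ γ' : ℝ → ℝ) (K : ℕ) (y : ℝ) : ℝ :=
  (1 - y ^ 2) * (min 1 (abelG γ γ' K y)) ^ 2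

open Classical in
noncomputable def abelW (γ γ' : ℝ → ℝ) (K n : ℕ) (y : ℝ) : ℝ :=
  if abelG γ γ' n y = 0 then 0 else abelU γ γ' K y / abelG γ γ' n y

noncomputable def abelWc (γ γ' : ℝ → ℝ) (K n : ℕ) (y : ℝ) : ℝ :=
  abelW γ γ' K n (max (-1) (min 1 y))

noncomputable def abelg (γ γ' : ℝ → ℝ) (K n : ℕ) (x : ℝ) : ℝ :=
  if x ≤ abelT γ (n+1) then
    (if x ≤ abelT γ n then 0 else abelWc γ γ' K n ((abelInv γ)^[n] x))
  else 0

noncomputable def abelPsi (γ γ' : ℝ → ℝ) (K : ℕ) (x : ℝ) : ℝ :=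
  ∑ᶠ n, abelg γ γ' K n x

theorem abel_equation_solution_parabolic
    (a δ : ℝ) (ha : 0 < a) (hδ : 0 < δ) (hδ1 : δ ≠ 1)
    (γ γ' : ℝ → ℝ)
    (hγderiv : ∀ x ∈ Ici (-1:ℝ), HasDerivAt γ (γ' x) x)
    (hγ'cont : ContinuousOn γ' (Ici (-1:ℝ)))
    (hmono : StrictMonoOn γ (Ici (-1:ℝ)))
    (himg : γ '' Ici (-1:ℝ) = Ici (1:ℝ))
    (hγm1 : γ (-1) = 1)
    (hfix : ∀ x ∈ Ici (-1:ℝ), x < γ x)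
    (hasymp : (fun x => γ' x - (1 + a * (1 - δ) * x ^ (-δ))) =o[atTop]
        fun x : ℝ => x ^ (-δ)) :
    ∃ φ φ' : ℝ → ℝ,
      (∀ x ∈ Ici (-1:ℝ), 0 < φ x) ∧
      StrictMonoOn φ (Ici (-1:ℝ)) ∧
      (∀ x ∈ Ici (-1:ℝ), HasDerivAt φ (φ' x) x) ∧
      ContinuousOn φ' (Ici (-1:ℝ)) ∧
      ∀ x ∈ Ici (-1:ℝ), φ (γ x) = φ x + 1 := by
  classical
  -- basic continuity facts
  have hγc : ContinuousOn γ (Ici (-1:ℝ)) :=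
    fun x hx => (hγderiv x hx).continuousAt.continuousWithinAt
  have hγ1 : ∀ x : ℝ, -1 ≤ x → (1:ℝ) ≤ γ x := by
    intro x hx
    have : γ x ∈ Ici (1:ℝ) := himg ▸ mem_image_of_mem γ hx
    exact this
  have hsurj : ∀ x : ℝ, (1:ℝ) ≤ x → ∃ y, -1 ≤ y ∧ γ y = x := by
    intro x hx
    have hx' : x ∈ Ici (1:ℝ) := hx
    rw [← himg] at hx'
    obtain ⟨y, hy, hyx⟩ := hx'
    exact ⟨y, hy, hyx⟩
  -- nonnegativity of γ'
  have hγ'0 : ∀ x : ℝ, -1 ≤ x → 0 ≤ γ' x := by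
    intro x hx
    have hd := (hγderiv x hx).hasDerivWithinAt (s := Ioi x)
    rw [hasDerivWithinAt_iff_tendsto_slope] at hd
    have heq : Ioi x \ {x} = Ioi x := diff_singleton_eq_self (by simp)
    rw [heq] at hd
    refine ge_of_tendsto hd ?_
    filter_upwards [self_mem_nhdsWithin] with z hz
    have hz' : x < z := hz
    have hγle : γ x ≤ γ z := (hmono hx (le_trans hx hz'.le) hz').le
    rw [slope_def_field]
    exact div_nonneg (sub_nonneg.2 hγle) (sub_nonneg.2 hz'.le)
  -- the orbit of -1
  have habelT0 : abelT γ 0 = -1 := rfl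
  have habelTsucc : ∀ n, abelT γ (n+1) = γ (abelT γ n) := by
    intro n; exact Function.iterate_succ_apply' γ n (-1)
  have hTmem : ∀ n, -1 ≤ abelT γ n := by
    intro n; induction n with
    | zero => exact le_rfl
    | succ n ih => rw [habelTsucc]; exact le_trans (by norm_num) (hγ1 _ ih)
  have hTmono : StrictMono (abelT γ) := by
    apply strictMono_nat_of_lt_succ
    intro n; rw [habelTsucc]; exact hfix _ (hTmem n)
  have hT1 : abelT γ 1 = 1 := by
    rw [habelTsucc 0, habelT0, hγm1]
  have hTs1 : ∀ n, abelT γ (n+1) = γ^[n] 1 := by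
    intro n
    have : abelT γ (n+1) = γ^[n] (γ (-1)) := Function.iterate_succ_apply γ n (-1)
    rw [this, hγm1]
  -- iterates of γ
  have hIterMem : ∀ (n : ℕ) (y : ℝ), -1 ≤ y → -1 ≤ γ^[n] y := by
    intro n
    induction n with
    | zero => intro y hy; exact hy
    | succ n ih =>
      intro y hy
      rw [Function.iterate_succ_apply' γ n y]
      exact le_trans (by norm_num) (hγ1 _ (ih y hy))
  have hIterMono : ∀ n : ℕ, StrictMonoOn (γ^[n]) (Ici (-1:ℝ)) := by
    intro n
    induction n with
    | zero => intro x _ y _ h; simpa using h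
    | succ n ih =>
      intro x hx y hy hxy
      rw [Function.iterate_succ_apply γ n x, Function.iterate_succ_apply γ n y]
      have hγx : -1 ≤ γ x := le_trans (by norm_num) (hγ1 x hx)
      have hγy : -1 ≤ γ y := le_trans (by norm_num) (hγ1 y hy)
      exact ih hγx hγy (hmono hx hy hxy)
  have hIterCont : ∀ n : ℕ, ContinuousOn (γ^[n]) (Ici (-1:ℝ)) := by
    intro n
    induction n with
    | zero => simpa using continuousOn_id
    | succ n ih =>
      rw [Function.iterate_succ γ n]
      exact ContinuousOn.comp ih hγc
        (fun x hx => le_trans (by norm_num) (hγ1 x hx))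
  have hIterGe : ∀ (n : ℕ) (y : ℝ), -1 ≤ y → abelT γ n ≤ γ^[n] y := by
    intro n y hy
    exact (hIterMono n).monotoneOn (self_mem_Ici) hy hy
  -- inverse function
  have hInvγ : ∀ y : ℝ, -1 ≤ y → abelInv γ (γ y) = y := by
    intro y hy
    have h1 : ¬ γ y < 1 := not_lt.2 (hγ1 y hy)
    rw [abelInv, if_neg h1]
    apply IsGreatest.csSup_eq
    constructor
    · exact ⟨hy, le_rfl⟩
    · intro z hz
      exact le_of_not_gt fun h => (hmono hy hz.1 h).not_ge hz.2
  have hγInv : ∀ x : ℝ, 1 ≤ x → -1 ≤ abelInv γ x ∧ γ (abelInv γ x) = x := by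
    intro x hx
    obtain ⟨y, hy, rfl⟩ := hsurj x hx
    rw [hInvγ y hy]
    exact ⟨hy, rfl⟩
  have hInvMono : Monotone (abelInv γ) := by
    intro x₁ x₂ h
    by_cases h1 : x₁ < 1 <;> by_cases h2 : x₂ < 1
    · simp only [abelInv, if_pos h1, if_pos h2]; linarith
    · have e2 := hγInv x₂ (not_lt.1 h2)
      simp only [abelInv, if_pos h1, if_neg h2]
      have : abelInv γ x₂ = sSup {y | -1 ≤ y ∧ γ y ≤ x₂} := by
        rw [abelInv, if_neg h2]
      rw [← this]
      linarith [e2.1]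
    · exact absurd (lt_of_le_of_lt h h2) h1
    · have e1 := hγInv x₁ (not_lt.1 h1)
      have e2 := hγInv x₂ (not_lt.1 h2)
      have goal : abelInv γ x₁ ≤ abelInv γ x₂ := by
        by_contra hcon
        push_neg at hcon
        have := hmono e2.1 e1.1 hcon
        rw [e1.2, e2.2] at this
        linarith
      exact goal
  have hInvSurj : Function.Surjective (abelInv γ) := by
    intro z
    rcases le_or_gt (-1 : ℝ) z with h | h
    · exact ⟨γ z, hInvγ z h⟩
    · refine ⟨z + 2, ?_⟩
      have h2 : z + 2 < 1 := by linarith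
      rw [abelInv, if_pos h2]; ring
  have hInvCont : Continuous (abelInv γ) :=
    hInvMono.continuous_of_surjective hInvSurj
  have hInvSpec : ∀ (n : ℕ) (x : ℝ), abelT γ n ≤ x →
      -1 ≤ (abelInv γ)^[n] x ∧ γ^[n] ((abelInv γ)^[n] x) = x := by
    intro n
    induction n with
    | zero => intro x hx; exact ⟨hx, rfl⟩
    | succ n ih =>
      intro x hx
      have hT1' : (1:ℝ) ≤ abelT γ (n+1) := by
        rw [habelTsucc]; exact hγ1 _ (hTmem n)
      have hx1 : (1:ℝ) ≤ x := le_trans hT1' hx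
      obtain ⟨hd1, hd2⟩ := hγInv x hx1
      have hdge : abelT γ n ≤ abelInv γ x := by
        by_contra hcon
        push_neg at hcon
        have := hmono hd1 (hTmem n) hcon
        rw [hd2, ← habelTsucc] at this
        exact absurd hx (not_le.2 this)
      obtain ⟨h1, h2⟩ := ih (abelInv γ x) hdge
      constructor
      · rw [Function.iterate_succ_apply (abelInv γ) n x]; exact h1
      · rw [Function.iterate_succ_apply (abelInv γ) n x,
          Function.iterate_succ_apply' γ n, h2, hd2]
  have hInvIter : ∀ (n : ℕ) (y : ℝ), -1 ≤ y → (abelInv γ)^[n] (γ^[n] y) = y := by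
    intro n
    induction n with
    | zero => intro y _; rfl
    | succ n ih =>
      intro y hy
      rw [Function.iterate_succ_apply γ n y,
        Function.iterate_succ_apply' (abelInv γ) n,
        ih (γ y) (le_trans (by norm_num) (hγ1 y hy)), hInvγ y hy]
  -- orbit goes to infinity
  have hTtop : Tendsto (abelT γ) atTop atTop := by
    rcases tendsto_of_monotone hTmono.monotone with h | ⟨l, hl⟩
    · exact h
    · exfalso
      have hlm : ∀ n, abelT γ n ≤ l := fun n => hTmono.monotone.ge_of_tendsto hl n
      have hl1 : -1 ≤ l := le_trans (le_of_eq habelT0.symm) (hlm 0)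
      have hcont : ContinuousAt γ l := (hγderiv l hl1).continuousAt
      have h2 : Tendsto (fun n => γ (abelT γ n)) atTop (𝓝 (γ l)) :=
        hcont.tendsto.comp hl
      have h2' : Tendsto (fun n => abelT γ (n+1)) atTop (𝓝 (γ l)) := by
        convert h2 using 2 with n
        exact habelTsucc n
      have h3 : Tendsto (fun n => abelT γ (n+1)) atTop (𝓝 l) :=
        hl.comp (tendsto_add_atTop_nat 1)
      have : γ l = l := tendsto_nhds_unique h2' h3
      exact absurd this (ne_of_gt (hfix l hl1))
  -- eventual positivity of γ'
  have hMexists : ∃ M : ℝ, ∀ x, M ≤ x → 0 < γ' x := by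
    have h1 : Tendsto (fun x : ℝ => γ' x - (1 + a * (1 - δ) * x ^ (-δ)))
        atTop (𝓝 0) := hasymp.isBigO.trans_tendsto (tendsto_rpow_neg_atTop hδ)
    have h2 : Tendsto (fun x : ℝ => 1 + a * (1 - δ) * x ^ (-δ)) atTop (𝓝 1) := by
      have h2' := (tendsto_rpow_neg_atTop hδ).const_mul (a * (1 - δ))
      have hc : Tendsto (fun _ : ℝ => (1:ℝ)) atTop (𝓝 1) := tendsto_const_nhds
      simpa using hc.add h2'
    have h3 : Tendsto γ' atTop (𝓝 1) := by
      have := h1.add h2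
      simpa using this
    have h4 : ∀ᶠ x in atTop, 0 < γ' x :=
      h3.eventually (lt_mem_nhds (by norm_num : (0:ℝ) < 1))
    obtain ⟨M, hM⟩ := eventually_atTop.1 h4
    exact ⟨M, hM⟩
  obtain ⟨M, hM⟩ := hMexists
  obtain ⟨K, hKM⟩ := (hTtop.eventually_ge_atTop M).exists
  have hKpos : ∀ x, abelT γ K ≤ x → 0 < γ' x := fun x h => hM x (le_trans hKM h)
  -- products
  have hProdCont : ∀ s : Finset ℕ,
      ContinuousOn (fun y => ∏ k ∈ s, γ' (γ^[k] y)) (Icc (-1:ℝ) 1) := by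
    intro s
    induction s using Finset.induction_on with
    | empty => simpa using continuousOn_const
    | insert k s' hns ih =>
      have h1 : ContinuousOn (fun y => γ' (γ^[k] y)) (Icc (-1:ℝ) 1) := by
        apply ContinuousOn.comp hγ'cont ((hIterCont k).mono Icc_subset_Ici_self)
        exact fun y hy => hIterMem k y hy.1
      have := h1.mul ih
      simpa [Finset.prod_insert hns, Pi.mul_def] using this
  have hGcont : ∀ n, ContinuousOn (abelG γ γ' n) (Icc (-1:ℝ) 1) :=
    fun n => hProdCont (Finset.range n)
  have hGnonneg : ∀ (n : ℕ) (y : ℝ), -1 ≤ y → 0 ≤ abelG γ γ' n y := by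
    intro n y hy
    exact Finset.prod_nonneg fun k _ => hγ'0 _ (hIterMem k y hy)
  have hGsucc : ∀ (n : ℕ) (y : ℝ),
      abelG γ γ' (n+1) y = abelG γ γ' n y * γ' (γ^[n] y) :=
    fun n y => Finset.prod_range_succ _ n
  have hIcoPos : ∀ (m n : ℕ) (y : ℝ), K ≤ m → -1 ≤ y →
      0 < ∏ k ∈ Finset.Ico m n, γ' (γ^[k] y) := by
    intro m n y hm hy
    apply Finset.prod_pos
    intro k hk
    have hk' : K ≤ k := le_trans hm (Finset.mem_Ico.1 hk).1
    exact hKpos _ (le_trans (hTmono.monotone hk') (hIterGe k y hy))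
  have hGsplit_low : ∀ (n : ℕ) (y : ℝ), n ≤ K →
      abelG γ γ' K y = abelG γ γ' n y * ∏ k ∈ Finset.Ico n K, γ' (γ^[k] y) :=
    fun n y h => (Finset.prod_range_mul_prod_Ico _ h).symm
  have hGsplit_high : ∀ (n : ℕ) (y : ℝ), K ≤ n →
      abelG γ γ' n y = abelG γ γ' K y * ∏ k ∈ Finset.Ico K n, γ' (γ^[k] y) :=
    fun n y h => (Finset.prod_range_mul_prod_Ico _ h).symm
  have hMinCont : ContinuousOn (fun y => min 1 (abelG γ γ' K y)) (Icc (-1:ℝ) 1) :=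
    (continuous_min.comp_continuousOn (continuousOn_const.prodMk (hGcont K)) :)
  -- abelU facts
  have hUcont : ContinuousOn (abelU γ γ' K) (Icc (-1:ℝ) 1) := by
    apply ContinuousOn.mul
    · exact (continuous_const.sub (continuous_pow 2)).continuousOn
    · exact hMinCont.pow 2
  have hU0 : ∀ y ∈ Icc (-1:ℝ) 1, 0 ≤ abelU γ γ' K y := by
    intro y hy
    apply mul_nonneg _ (sq_nonneg _)
    nlinarith [hy.1, hy.2]
  have hUone : abelU γ γ' K 1 = 0 := by simp [abelU]
  have hUmone : abelU γ γ' K (-1) = 0 := by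
    simp only [abelU]; norm_num
  -- abelW facts
  have hWnonneg : ∀ (n : ℕ) (y : ℝ), y ∈ Icc (-1:ℝ) 1 → 0 ≤ abelW γ γ' K n y := by
    intro n y hy
    by_cases h : abelG γ γ' n y = 0
    · simp [abelW, h]
    · rw [abelW, if_neg h]
      exact div_nonneg (hU0 y hy) (hGnonneg n y hy.1)
  have hWone : ∀ n, abelW γ γ' K n 1 = 0 := by
    intro n
    by_cases h : abelG γ γ' n 1 = 0
    · simp [abelW, h]
    · rw [abelW, if_neg h, hUone, zero_div]
  have hWmone : ∀ n, abelW γ γ' K n (-1) = 0 := by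
    intro n
    by_cases h : abelG γ γ' n (-1) = 0
    · simp [abelW, h]
    · rw [abelW, if_neg h, hUmone, zero_div]
  -- continuity of abelW
  have hWcont : ∀ n, ContinuousOn (abelW γ γ' K n) (Icc (-1:ℝ) 1) := by
    intro n
    intro y₀ hy₀
    by_cases h0 : abelG γ γ' n y₀ = 0
    · -- squeeze to 0
      have hval : abelW γ γ' K n y₀ = 0 := by rw [abelW, if_pos h0]
      have hminnn : ∀ y : ℝ, -1 ≤ y → 0 ≤ min 1 (abelG γ γ' K y) :=
        fun y hy => le_min zero_le_one (hGnonneg K y hy)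
      have husq : ∀ y ∈ Icc (-1:ℝ) 1,
          abelU γ γ' K y ≤ (min 1 (abelG γ γ' K y)) ^ 2 := by
        intro y hy
        have h1y : 1 - y ^ 2 ≤ 1 := by nlinarith [sq_nonneg y]
        exact mul_le_of_le_one_left (sq_nonneg _) h1y
      by_cases hnK : n ≤ K
      · set R : ℝ → ℝ := fun y => ∏ k ∈ Finset.Ico n K, γ' (γ^[k] y) with hR
        have hRnonneg : ∀ y : ℝ, -1 ≤ y → 0 ≤ R y :=
          fun y hy => Finset.prod_nonneg fun k _ => hγ'0 _ (hIterMem k y hy)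
        have hBcont : ContinuousWithinAt
            (fun y => min 1 (abelG γ γ' K y) * R y) (Icc (-1:ℝ) 1) y₀ :=
          (hMinCont.mul (hProdCont _)) y₀ hy₀
        have hB0 : min 1 (abelG γ γ' K y₀) * R y₀ = 0 := by
          have hGK0 : abelG γ γ' K y₀ = 0 := by
            rw [hGsplit_low n y₀ hnK, h0, zero_mul]
          rw [hGK0]
          norm_num
        have htend : Tendsto (abelW γ γ' K n) (𝓝[Icc (-1:ℝ) 1] y₀) (𝓝 0) := by
          refine squeeze_zero' (g := fun y => min 1 (abelG γ γ' K y) * R y) ?_ ?_ ?_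
          · filter_upwards [self_mem_nhdsWithin] with y hy
            exact hWnonneg n y hy
          · filter_upwards [self_mem_nhdsWithin] with y hy
            by_cases hGy : abelG γ γ' n y = 0
            · rw [abelW, if_pos hGy]
              exact mul_nonneg (hminnn y hy.1) (hRnonneg y hy.1)
            · have hGpos : 0 < abelG γ γ' n y :=
                lt_of_le_of_ne (hGnonneg n y hy.1) (Ne.symm hGy)
              rw [abelW, if_neg hGy, div_le_iff₀ hGpos]
              have hGKy : abelG γ γ' K y = abelG γ γ' n y * R y :=
                hGsplit_low n y hnK
              calc abelU γ γ' K y ≤ (min 1 (abelG γ γ' K y)) ^ 2 := husq y hy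
                _ = min 1 (abelG γ γ' K y) * min 1 (abelG γ γ' K y) := sq _
                _ ≤ min 1 (abelG γ γ' K y) * abelG γ γ' K y :=
                    mul_le_mul_of_nonneg_left (min_le_right _ _) (hminnn y hy.1)
                _ = min 1 (abelG γ γ' K y) * R y * abelG γ γ' n y := by
                    rw [hGKy]; ring
          · have hBt : Tendsto (fun y => min 1 (abelG γ γ' K y) * R y)
                (𝓝[Icc (-1:ℝ) 1] y₀) (𝓝 (min 1 (abelG γ γ' K y₀) * R y₀)) := hBcont
            rw [hB0] at hBt
            exact hBt
        have : Tendsto (abelW γ γ' K n) (𝓝[Icc (-1:ℝ) 1] y₀)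
            (𝓝 (abelW γ γ' K n y₀)) := by rwa [hval]
        exact this
      · push_neg at hnK
        have hKn : K ≤ n := hnK.le
        set P : ℝ → ℝ := fun y => ∏ k ∈ Finset.Ico K n, γ' (γ^[k] y) with hP
        have hPpos : ∀ y : ℝ, -1 ≤ y → 0 < P y :=
          fun y hy => hIcoPos K n y le_rfl hy
        have hGK0 : abelG γ γ' K y₀ = 0 := by
          have hs := hGsplit_high n y₀ hKn
          rw [h0] at hs
          rcases mul_eq_zero.1 hs.symm with h | h
          · exact h
          · exact absurd h (hPpos y₀ hy₀.1).ne'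
        have hBcont : ContinuousWithinAt
            (fun y => min 1 (abelG γ γ' K y) / P y) (Icc (-1:ℝ) 1) y₀ :=
          (hMinCont y₀ hy₀).div
            ((hProdCont _) y₀ hy₀) (hPpos y₀ hy₀.1).ne'
        have hB0 : min 1 (abelG γ γ' K y₀) / P y₀ = 0 := by
          rw [hGK0]; norm_num
        have htend : Tendsto (abelW γ γ' K n) (𝓝[Icc (-1:ℝ) 1] y₀) (𝓝 0) := by
          refine squeeze_zero' (g := fun y => min 1 (abelG γ γ' K y) / P y) ?_ ?_ ?_
          · filter_upwards [self_mem_nhdsWithin] with y hy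
            exact hWnonneg n y hy
          · filter_upwards [self_mem_nhdsWithin] with y hy
            by_cases hGy : abelG γ γ' n y = 0
            · rw [abelW, if_pos hGy]
              exact div_nonneg (hminnn y hy.1) (hPpos y hy.1).le
            · have hGpos : 0 < abelG γ γ' n y :=
                lt_of_le_of_ne (hGnonneg n y hy.1) (Ne.symm hGy)
              have hGKy : abelG γ γ' n y = abelG γ γ' K y * P y :=
                hGsplit_high n y hKn
              have hGKpos : 0 < abelG γ γ' K y := by
                rcases lt_or_eq_of_le (hGnonneg K y hy.1) with h | h
                · exact h
                · exfalso; rw [hGKy, ← h, zero_mul] at hGpos; exact lt_irrefl _ hGpos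
              rw [abelW, if_neg hGy,
                div_le_div_iff₀ hGpos (hPpos y hy.1)]
              calc abelU γ γ' K y * P y ≤ (min 1 (abelG γ γ' K y)) ^ 2 * P y :=
                    mul_le_mul_of_nonneg_right (husq y hy) (hPpos y hy.1).le
                _ = min 1 (abelG γ γ' K y) * min 1 (abelG γ γ' K y) * P y := by
                    rw [sq]
                _ ≤ min 1 (abelG γ γ' K y) * abelG γ γ' K y * P y := by
                    apply mul_le_mul_of_nonneg_right _ (hPpos y hy.1).le
                    exact mul_le_mul_of_nonneg_left (min_le_right _ _) (hminnn y hy.1)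
                _ = min 1 (abelG γ γ' K y) * abelG γ γ' n y := by
                    rw [hGKy]; ring
          · have hBt : Tendsto (fun y => min 1 (abelG γ γ' K y) / P y)
                (𝓝[Icc (-1:ℝ) 1] y₀) (𝓝 (min 1 (abelG γ γ' K y₀) / P y₀)) := hBcont
            rw [hB0] at hBt
            exact hBt
        have : Tendsto (abelW γ γ' K n) (𝓝[Icc (-1:ℝ) 1] y₀)
            (𝓝 (abelW γ γ' K n y₀)) := by rwa [hval]
        exact this
    · -- locally a quotient of continuous functions
      have hGc := (hGcont n) y₀ hy₀
      have hev : ∀ᶠ y in 𝓝[Icc (-1:ℝ) 1] y₀, abelG γ γ' n y ≠ 0 :=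
        hGc.eventually_ne h0
      have hdiv : ContinuousWithinAt
          (fun y => abelU γ γ' K y / abelG γ γ' n y) (Icc (-1:ℝ) 1) y₀ :=
        (hUcont y₀ hy₀).div hGc h0
      apply hdiv.congr_of_eventuallyEq
      · filter_upwards [hev] with y hy
        rw [abelW, if_neg hy]
      · rw [abelW, if_neg h0]
  -- cocycle identity for abelW
  have hWcoc : ∀ (n : ℕ) (y : ℝ), y ∈ Icc (-1:ℝ) 1 →
      abelW γ γ' K (n+1) y * γ' (γ^[n] y) = abelW γ γ' K n y := by
    intro n y hy
    have hGs := hGsucc n y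
    by_cases h0 : abelG γ γ' n y = 0
    · have h1 : abelG γ γ' (n+1) y = 0 := by rw [hGs, h0, zero_mul]
      rw [abelW, if_pos h1, abelW, if_pos h0, zero_mul]
    · by_cases h2 : γ' (γ^[n] y) = 0
      · have h1 : abelG γ γ' (n+1) y = 0 := by rw [hGs, h2, mul_zero]
        have hnK : n < K := by
          by_contra hcon
          push_neg at hcon
          have hpos : 0 < γ' (γ^[n] y) :=
            hKpos _ (le_trans (hTmono.monotone hcon) (hIterGe n y hy.1))
          rw [h2] at hpos
          exact lt_irrefl _ hpos
        have hGK : abelG γ γ' K y = 0 :=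
          Finset.prod_eq_zero (Finset.mem_range.2 hnK) h2
        have hu : abelU γ γ' K y = 0 := by
          rw [abelU, hGK]
          norm_num
        rw [abelW, if_pos h1, abelW, if_neg h0, hu, zero_div, zero_mul]
      · have h1 : abelG γ γ' (n+1) y ≠ 0 := by
          rw [hGs]; exact mul_ne_zero h0 h2
        rw [abelW, if_neg h1, abelW, if_neg h0, hGs]
        field_simp
  -- clamping
  have hclmem : ∀ y : ℝ, max (-1) (min 1 y) ∈ Icc (-1:ℝ) 1 := by
    intro y
    constructor
    · exact le_max_left _ _
    · exact max_le (by norm_num) (min_le_left _ _)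
  have hclid : ∀ y : ℝ, -1 ≤ y → y ≤ 1 → max (-1) (min 1 y) = y := by
    intro y h1 h2
    rw [min_eq_right h2, max_eq_right h1]
  have hWcCont : ∀ n, Continuous (abelWc γ γ' K n) := by
    intro n
    have hcl : Continuous fun y : ℝ => max (-1) (min 1 y) :=
      continuous_const.max (continuous_const.min continuous_id)
    exact (hWcont n).comp_continuous hcl hclmem
  have hWcNonneg : ∀ (n : ℕ) (y : ℝ), 0 ≤ abelWc γ γ' K n y :=
    fun n y => hWnonneg n _ (hclmem y)
  have hWcOne : ∀ n, abelWc γ γ' K n 1 = 0 := by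
    intro n
    rw [abelWc, hclid 1 (by norm_num) le_rfl]
    exact hWone n
  have hWcMone : ∀ n, abelWc γ γ' K n (-1) = 0 := by
    intro n
    rw [abelWc, hclid (-1) le_rfl (by norm_num)]
    exact hWmone n
  -- continuity of the pieces
  have hgCont : ∀ n, Continuous (abelg γ γ' K n) := by
    intro n
    have hcomp : Continuous fun x => abelWc γ γ' K n ((abelInv γ)^[n] x) :=
      (hWcCont n).comp (hInvCont.iterate n)
    have hinner : Continuous fun x =>
        if x ≤ abelT γ n then 0 else abelWc γ γ' K n ((abelInv γ)^[n] x) := by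
      apply Continuous.if_le continuous_const hcomp continuous_id' continuous_const
      intro x hx
      have h1 : (abelInv γ)^[n] x = -1 := by
        rw [hx]
        have : abelT γ n = γ^[n] (-1) := rfl
        rw [this]
        exact hInvIter n (-1) le_rfl
      rw [h1, hWcMone n]
    have : Continuous fun x =>
        if x ≤ abelT γ (n+1) then
          (if x ≤ abelT γ n then 0 else abelWc γ γ' K n ((abelInv γ)^[n] x))
        else 0 := by
      apply Continuous.if_le hinner continuous_const continuous_id' continuous_const
      intro x hx
      have h2 : ¬ x ≤ abelT γ n := by
        rw [hx]; exact not_le.2 (hTmono (lt_add_one n))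
      rw [if_neg h2]
      have h3 : (abelInv γ)^[n] x = 1 := by
        rw [hx, hTs1 n]
        exact hInvIter n 1 (by norm_num)
      rw [h3, hWcOne n]
    exact this
  have hgNonneg : ∀ (n : ℕ) (x : ℝ), 0 ≤ abelg γ γ' K n x := by
    intro n x
    rw [abelg]
    split_ifs with h1 h2
    · exact le_rfl
    · exact hWcNonneg n _
    · exact le_rfl
  have hgSupp : ∀ (n : ℕ) (x : ℝ), abelg γ γ' K n x ≠ 0 →
      abelT γ n < x ∧ x ≤ abelT γ (n+1) := by
    intro n x h
    rw [abelg] at h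
    split_ifs at h with h1 h2
    · exact absurd rfl h
    · exact ⟨not_le.1 h2, h1⟩
    · exact absurd rfl h
  -- psi
  have hlocfin : LocallyFinite fun n => Function.support (abelg γ γ' K n) := by
    intro x
    refine ⟨Iio (x+1), Iio_mem_nhds (by linarith), ?_⟩
    obtain ⟨N, hN⟩ := eventually_atTop.1 (hTtop.eventually_ge_atTop (x+1))
    apply Set.Finite.subset (Set.finite_lt_nat N)
    intro n hn
    obtain ⟨z, hz1, hz2⟩ := hn
    have h := hgSupp n z hz1
    simp only [Set.mem_setOf_eq]
    by_contra hcon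
    push_neg at hcon
    have := hN n hcon
    have hz3 : z < x + 1 := hz2
    linarith [h.1]
  have hPsiCont : Continuous (abelPsi γ γ' K) := continuous_finsum hgCont hlocfin
  have hPsiNonneg : ∀ x, 0 ≤ abelPsi γ γ' K x :=
    fun x => finsum_nonneg fun n => hgNonneg n x
  have hPsiEval : ∀ (n : ℕ) (x : ℝ), abelT γ n < x → x ≤ abelT γ (n+1) →
      abelPsi γ γ' K x = abelg γ γ' K n x := by
    intro n x h1 h2
    apply finsum_eq_single
    intro m hm
    rw [abelg]
    split_ifs with c1 c2
    · rfl
    · exfalso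
      have hmn : m < n + 1 := hTmono.lt_iff_lt.1 (lt_of_lt_of_le (not_le.1 c2) h2)
      have hnm : n < m + 1 := hTmono.lt_iff_lt.1 (lt_of_lt_of_le h1 c1)
      exact hm (by omega)
    · rfl
  have hPsi0 : ∀ x : ℝ, x ≤ -1 → abelPsi γ γ' K x = 0 := by
    intro x hx
    apply finsum_eq_zero_of_forall_eq_zero
    intro n
    rw [abelg]
    split_ifs with h1 h2
    · rfl
    · exact absurd (le_trans hx (hTmem n)) h2
    · rfl
  have hIndex : ∀ x : ℝ, -1 < x → ∃ n, abelT γ n < x ∧ x ≤ abelT γ (n+1) := by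
    intro x hx
    have hex : ∃ m, x ≤ abelT γ (m+1) := by
      obtain ⟨m, hm⟩ := (hTtop.eventually_ge_atTop x).exists
      exact ⟨m, le_trans hm (hTmono.monotone (Nat.le_succ m))⟩
    refine ⟨Nat.find hex, ?_, Nat.find_spec hex⟩
    rcases Nat.eq_zero_or_pos (Nat.find hex) with h | h
    · rw [h, habelT0]; exact hx
    · have h2 := Nat.find_min hex (Nat.sub_lt h one_pos)
      have h3 : Nat.find hex - 1 + 1 = Nat.find hex := Nat.succ_pred_eq_of_pos h
      rw [h3] at h2
      exact not_le.1 h2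
  -- the cocycle identity for psi
  have hCoc : ∀ x : ℝ, -1 ≤ x → abelPsi γ γ' K (γ x) * γ' x = abelPsi γ γ' K x := by
    intro x hx
    rcases eq_or_lt_of_le hx with heq | hlt
    · -- x = -1
      have hx1 : x = -1 := heq.symm
      subst hx1
      have h1 : abelPsi γ γ' K (γ (-1)) = 0 := by
        rw [hγm1, hPsiEval 0 1 (by rw [habelT0]; norm_num) (le_of_eq hT1.symm)]
        rw [abelg, if_pos (le_of_eq hT1.symm), if_neg (by rw [habelT0]; norm_num)]
        exact hWcOne 0
      rw [h1, zero_mul, hPsi0 (-1) le_rfl]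
    · obtain ⟨n, hn1, hn2⟩ := hIndex x hlt
      obtain ⟨hy1, hy2⟩ := hInvSpec n x hn1.le
      set y := (abelInv γ)^[n] x with hydef
      have hyne : y ≠ -1 := by
        intro h
        apply hn1.ne'
        rw [← hy2, h]
        rfl
      have hygt : -1 < y := lt_of_le_of_ne hy1 (Ne.symm hyne)
      have hyle : y ≤ 1 := by
        by_contra hcon
        push_neg at hcon
        have h2 : γ^[n] 1 < γ^[n] y :=
          hIterMono n (by norm_num) hy1 hcon
        rw [hy2, ← hTs1 n] at h2
        exact absurd hn2 (not_le.2 h2)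
      have hpsix : abelPsi γ γ' K x = abelW γ γ' K n y := by
        rw [hPsiEval n x hn1 hn2, abelg, if_pos hn2, if_neg (not_le.2 hn1),
          abelWc, ← hydef, hclid y hygt.le hyle]
      have hγx1 : abelT γ (n+1) < γ x := by
        have := hmono (hTmem n) hx hn1
        rwa [← habelTsucc] at this
      have hγx2 : γ x ≤ abelT γ (n+2) := by
        have := hmono.monotoneOn hx (hTmem (n+1)) hn2
        rwa [← habelTsucc] at this
      have hdlγx : (abelInv γ)^[n+1] (γ x) = y := by
        rw [Function.iterate_succ_apply (abelInv γ) n (γ x), hInvγ x hx]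
      have hpsiγx : abelPsi γ γ' K (γ x) = abelW γ γ' K (n+1) y := by
        rw [hPsiEval (n+1) (γ x) hγx1 hγx2, abelg, if_pos hγx2,
          if_neg (not_le.2 hγx1), abelWc, hdlγx, hclid y hygt.le hyle]
      rw [hpsix, hpsiγx, ← hy2]
      exact hWcoc n y ⟨hygt.le, hyle⟩
  -- density of points where abelG is nonzero
  have hDense : ∀ (n : ℕ) (α β : ℝ), -1 ≤ α → α < β → β ≤ 1 →
      ∃ y, (α < y ∧ y < β) ∧ abelG γ γ' n y ≠ 0 := by
    intro n
    induction n with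
    | zero =>
      intro α β h1 h2 h3
      exact ⟨(α+β)/2, ⟨by linarith, by linarith⟩, by simp [abelG]⟩
    | succ n ih =>
      intro α β hα hαβ hβ
      have hnz : ¬ ∀ y₁, α < y₁ → y₁ < β → γ' (γ^[n] y₁) = 0 := by
        intro hall
        set α' := α + (β - α)/4 with hα'def
        set β' := β - (β - α)/4 with hβ'def
        have hα'β' : α' < β' := by rw [hα'def, hβ'def]; linarith
        have hαα' : α < α' := by rw [hα'def]; linarith
        have hβ'β : β' < β := by rw [hβ'def]; linarith
        have hα'm : -1 ≤ α' := le_trans hα hαα'.le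
        have hβ'm : -1 ≤ β' := le_trans hα'm hα'β'.le
        have hA : abelT γ n ≤ γ^[n] α' := hIterGe n α' hα'm
        have hIltI : γ^[n] α' < γ^[n] β' := hIterMono n hα'm hβ'm hα'β'
        have hIm : -1 ≤ γ^[n] α' := hIterMem n α' hα'm
        have hconst := constant_of_has_deriv_right_zero
            (f := γ) (a := γ^[n] α') (b := γ^[n] β')
            (hγc.mono (fun z hz => le_trans hIm hz.1))
            (by
              intro z hz
              have hz1 : abelT γ n ≤ z := le_trans hA hz.1
              have hzI : -1 ≤ z := le_trans (hTmem n) hz1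
              obtain ⟨hw1, hw2⟩ := hInvSpec n z hz1
              set w := (abelInv γ)^[n] z with hwdef
              have hwα' : α' ≤ w := by
                by_contra hcon
                push_neg at hcon
                have := hIterMono n hw1 hα'm hcon
                rw [hw2] at this
                exact absurd hz.1 (not_le.2 this)
              have hwβ' : w < β' := by
                by_contra hcon
                push_neg at hcon
                have := (hIterMono n).monotoneOn hβ'm hw1 hcon
                rw [hw2] at this
                exact absurd hz.2 (not_lt.2 this)
              have hzero : γ' z = 0 := by
                rw [← hw2]
                exact hall w (lt_of_lt_of_le hαα' hwα') (lt_trans hwβ' hβ'β)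
              have hzderiv := hγderiv z hzI
              rw [hzero] at hzderiv
              exact hzderiv.hasDerivWithinAt)
            (γ^[n] β') (right_mem_Icc.2 hIltI.le)
        have hlt := hmono hIm (le_trans hIm hIltI.le) hIltI
        rw [hconst] at hlt
        exact lt_irrefl _ hlt
      have hstep : ∃ y₁, (α < y₁ ∧ y₁ < β) ∧ γ' (γ^[n] y₁) ≠ 0 := by
        by_contra hcon
        push_neg at hcon
        apply hnz
        intro y₁ h1 h2
        by_contra hne
        exact hne (hcon y₁ ⟨h1, h2⟩)
      obtain ⟨y₁, ⟨hy11, hy12⟩, hy13⟩ := hstep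
      have hIoosub : Ioo α β ⊆ Ici (-1:ℝ) := fun z hz => le_trans hα hz.1.le
      have hcontc : ContinuousOn (fun y => γ' (γ^[n] y)) (Ioo α β) :=
        ContinuousOn.comp hγ'cont ((hIterCont n).mono hIoosub)
          (fun z hz => hIterMem n z (hIoosub hz))
      have hopen : IsOpen (Ioo α β ∩ (fun y => γ' (γ^[n] y)) ⁻¹' {(0:ℝ)}ᶜ) :=
        hcontc.isOpen_inter_preimage isOpen_Ioo isOpen_compl_singleton
      have hy₁mem : y₁ ∈ Ioo α β ∩ (fun y => γ' (γ^[n] y)) ⁻¹' {(0:ℝ)}ᶜ :=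
        ⟨⟨hy11, hy12⟩, hy13⟩
      obtain ⟨ε, hε, hball⟩ := Metric.isOpen_iff.1 hopen y₁ hy₁mem
      set α₂ := max α (y₁ - ε/2) with hα₂def
      set β₂ := min β (y₁ + ε/2) with hβ₂def
      have hα₂y : α₂ < y₁ := max_lt hy11 (by linarith)
      have hyβ₂ : y₁ < β₂ := lt_min hy12 (by linarith)
      have hsub : Ioo α₂ β₂ ⊆ Ioo α β ∩ (fun y => γ' (γ^[n] y)) ⁻¹' {(0:ℝ)}ᶜ := by
        intro z hz
        apply hball
        rw [Real.ball_eq_Ioo]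
        constructor
        · have := le_max_right α (y₁ - ε/2)
          have h1 : y₁ - ε/2 ≤ α₂ := this
          have h2 : α₂ < z := hz.1
          linarith
        · have h1 : β₂ ≤ y₁ + ε/2 := min_le_right _ _
          have h2 : z < β₂ := hz.2
          linarith
      obtain ⟨y, hy, hGy⟩ := ih α₂ β₂ (le_trans hα (le_max_left _ _))
        (lt_trans hα₂y hyβ₂) (le_trans (min_le_left _ _) hβ)
      have hymem := hsub ⟨hy.1, hy.2⟩
      refine ⟨y, ⟨lt_of_le_of_lt (le_max_left _ _) hy.1,
        lt_of_lt_of_le hy.2 (min_le_left _ _)⟩, ?_⟩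
      rw [hGsucc n y]
      exact mul_ne_zero hGy hymem.2
  -- positivity of psi at a point in any subinterval
  have hPosPoint : ∀ x₁ x₂ : ℝ, -1 ≤ x₁ → x₁ < x₂ →
      ∃ z, x₁ < z ∧ z < x₂ ∧ 0 < abelPsi γ γ' K z := by
    intro x₁ x₂ h1 h2
    obtain ⟨N, hN1, hN2⟩ := hIndex x₂ (lt_of_le_of_lt h1 h2)
    set s := max x₁ (abelT γ N) with hsdef
    have hs2 : s < x₂ := max_lt h2 hN1
    have hsN : abelT γ N ≤ s := le_max_right _ _
    obtain ⟨hαv1, hαv2⟩ := hInvSpec N s hsN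
    obtain ⟨hβv1, hβv2⟩ := hInvSpec N x₂ (le_trans hsN hs2.le)
    set αv := (abelInv γ)^[N] s with hαdef
    set βv := (abelInv γ)^[N] x₂ with hβdef
    have hαβ : αv < βv := by
      by_contra hcon
      push_neg at hcon
      have := (hIterMono N).monotoneOn hβv1 hαv1 hcon
      rw [hαv2, hβv2] at this
      exact absurd this (not_le.2 hs2)
    have hβv3 : βv ≤ 1 := by
      by_contra hcon
      push_neg at hcon
      have := hIterMono N (by norm_num) hβv1 hcon
      rw [hβv2, ← hTs1 N] at this
      exact absurd hN2 (not_le.2 this)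
    obtain ⟨y, hy, hGKy⟩ := hDense K αv βv hαv1 hαβ hβv3
    have hy1 : -1 ≤ y := le_trans hαv1 hy.1.le
    set z := γ^[N] y with hzdef
    have hz1 : s < z := by
      have := hIterMono N hαv1 hy1 hy.1
      rwa [hαv2] at this
    have hz2 : z < x₂ := by
      have := hIterMono N hy1 hβv1 hy.2
      rwa [hβv2] at this
    have hzx₁ : x₁ < z := lt_of_le_of_lt (le_max_left _ _) hz1
    have hzT1 : abelT γ N < z := lt_of_le_of_lt (le_max_right _ _) hz1
    have hzT2 : z ≤ abelT γ (N+1) := le_trans hz2.le hN2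
    have hGKpos : 0 < abelG γ γ' K y :=
      lt_of_le_of_ne (hGnonneg K y hy1) (Ne.symm hGKy)
    have hGNy : 0 < abelG γ γ' N y := by
      rcases le_or_gt N K with hc | hc
      · have hsplit := hGsplit_low N y hc
        have hne : abelG γ γ' N y ≠ 0 := by
          intro h
          rw [hsplit, h, zero_mul] at hGKy
          exact hGKy rfl
        exact lt_of_le_of_ne (hGnonneg N y hy1) (Ne.symm hne)
      · rw [hGsplit_high N y hc.le]
        exact mul_pos hGKpos (hIcoPos K N y le_rfl hy1)
    have hygt : -1 < y := lt_of_le_of_lt hαv1 hy.1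
    have hylt : y < 1 := lt_of_lt_of_le hy.2 hβv3
    have hUy : 0 < abelU γ γ' K y := by
      apply mul_pos (by nlinarith)
      exact pow_pos (lt_min one_pos hGKpos) 2
    have hpsi : abelPsi γ γ' K z = abelW γ γ' K N y := by
      rw [hPsiEval N z hzT1 hzT2, abelg, if_pos hzT2, if_neg (not_le.2 hzT1),
        abelWc, hzdef, hInvIter N y hy1, hclid y hygt.le hylt.le]
    refine ⟨z, hzx₁, hz2, ?_⟩
    rw [hpsi, abelW, if_neg hGNy.ne']
    exact div_pos hUy hGNy
  -- positivity of integrals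
  have hIntPos : ∀ x₁ x₂ : ℝ, -1 ≤ x₁ → x₁ < x₂ →
      0 < ∫ t in x₁..x₂, abelPsi γ γ' K t := by
    intro x₁ x₂ h1 h2
    obtain ⟨z, hz1, hz2, hz3⟩ := hPosPoint x₁ x₂ h1 h2
    have hev : ∀ᶠ t in 𝓝 z, abelPsi γ γ' K z / 2 < abelPsi γ γ' K t :=
      hPsiCont.continuousAt.eventually (lt_mem_nhds (by linarith))
    obtain ⟨U, hU, hUo, hUz⟩ := eventually_nhds_iff.1 hev
    obtain ⟨ε, hε, hball⟩ := Metric.isOpen_iff.1 hUo z hUz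
    set p := max x₁ (z - ε/2) with hpdef
    set q := min x₂ (z + ε/2) with hqdef
    have hpz : p < z := max_lt hz1 (by linarith)
    have hzq : z < q := lt_min hz2 (by linarith)
    have hpq : p < q := lt_trans hpz hzq
    have hx₁p : x₁ ≤ p := le_max_left _ _
    have hqx₂ : q ≤ x₂ := min_le_left _ _
    have hmid : (q - p) * (abelPsi γ γ' K z / 2) ≤ ∫ t in p..q, abelPsi γ γ' K t := by
      have hint := intervalIntegral.integral_mono_on hpq.le
        (intervalIntegrable_const (μ := MeasureTheory.volume) (c := abelPsi γ γ' K z / 2))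
        (hPsiCont.intervalIntegrable p q)
        (fun t ht => by
          have hd : dist t z < ε := by
            rw [Real.dist_eq, abs_lt]
            constructor
            · have : z - ε/2 ≤ p := le_max_right _ _
              have := ht.1
              linarith
            · have : q ≤ z + ε/2 := min_le_right _ _
              have := ht.2
              linarith
          exact (hU t (hball hd)).le)
      rwa [intervalIntegral.integral_const, smul_eq_mul] at hint
    have hmidpos : 0 < ∫ t in p..q, abelPsi γ γ' K t := by
      apply lt_of_lt_of_le _ hmid
      apply mul_pos (by linarith) (by linarith)
    have e1 : (∫ t in x₁..p, abelPsi γ γ' K t) + ∫ t in p..x₂, abelPsi γ γ' K t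
        = ∫ t in x₁..x₂, abelPsi γ γ' K t :=
      intervalIntegral.integral_add_adjacent_intervals
        (hPsiCont.intervalIntegrable _ _) (hPsiCont.intervalIntegrable _ _)
    have e2 : (∫ t in p..q, abelPsi γ γ' K t) + ∫ t in q..x₂, abelPsi γ γ' K t
        = ∫ t in p..x₂, abelPsi γ γ' K t :=
      intervalIntegral.integral_add_adjacent_intervals
        (hPsiCont.intervalIntegrable _ _) (hPsiCont.intervalIntegrable _ _)
    have n1 : 0 ≤ ∫ t in x₁..p, abelPsi γ γ' K t :=
      intervalIntegral.integral_nonneg hx₁p (fun t _ => hPsiNonneg t)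
    have n2 : 0 ≤ ∫ t in q..x₂, abelPsi γ γ' K t :=
      intervalIntegral.integral_nonneg hqx₂ (fun t _ => hPsiNonneg t)
    linarith
  -- assemble the solution
  set c := ∫ t in (-1:ℝ)..1, abelPsi γ γ' K t with hcdef
  have hcpos : 0 < c := hIntPos (-1) 1 le_rfl (by norm_num)
  set φf : ℝ → ℝ := fun x => 1 + (∫ t in (-1:ℝ)..x, abelPsi γ γ' K t)/c with hφfdef
  have hFTC : ∀ x : ℝ, HasDerivAt (fun u => ∫ t in (-1:ℝ)..u, abelPsi γ γ' K t)
      (abelPsi γ γ' K x) x := fun x =>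
    intervalIntegral.integral_hasDerivAt_right
      (hPsiCont.intervalIntegrable _ _)
      (hPsiCont.stronglyMeasurableAtFilter _ _)
      hPsiCont.continuousAt
  have hφD : ∀ x : ℝ, HasDerivAt φf (abelPsi γ γ' K x / c) x := by
    intro x
    exact ((hFTC x).div_const c).const_add 1
  have hφcont : Continuous φf :=
    continuous_iff_continuousAt.2 fun x => (hφD x).continuousAt
  refine ⟨φf, fun x => abelPsi γ γ' K x / c, ?_, ?_, ?_, ?_, ?_⟩
  · -- positivity
    intro x hx
    have h0 : 0 ≤ ∫ t in (-1:ℝ)..x, abelPsi γ γ' K t :=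
      intervalIntegral.integral_nonneg hx (fun t _ => hPsiNonneg t)
    have := div_nonneg h0 hcpos.le
    rw [hφfdef]
    dsimp only
    linarith
  · -- strict monotonicity
    intro x₁ h₁ x₂ h₂ hlt
    have key := hIntPos x₁ x₂ h₁ hlt
    have hadd : (∫ t in (-1:ℝ)..x₁, abelPsi γ γ' K t)
        + ∫ t in x₁..x₂, abelPsi γ γ' K t
        = ∫ t in (-1:ℝ)..x₂, abelPsi γ γ' K t :=
      intervalIntegral.integral_add_adjacent_intervals
        (hPsiCont.intervalIntegrable _ _) (hPsiCont.intervalIntegrable _ _)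
    rw [hφfdef]
    dsimp only
    have hI : (∫ t in (-1:ℝ)..x₁, abelPsi γ γ' K t)
        < ∫ t in (-1:ℝ)..x₂, abelPsi γ γ' K t := by linarith
    gcongr
  · -- derivative
    intro x _
    exact hφD x
  · -- continuity of the derivative
    exact ((hPsiCont.div_const c).continuousOn).mono (subset_univ _)
  · -- the Abel equation
    intro b hb
    have hker : ∀ x ∈ Icc (-1:ℝ) b, φf (γ x) - φf x = φf (γ (-1)) - φf (-1) := by
      apply constant_of_has_deriv_right_zero
      · apply ContinuousOn.sub
        · exact hφcont.comp_continuousOn (hγc.mono Icc_subset_Ici_self)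
        · exact hφcont.continuousOn
      · intro x hx
        have hxI : -1 ≤ x := hx.1
        have h1 := (hφD (γ x)).comp x (hγderiv x hxI)
        have h2 := h1.sub (hφD x)
        have h3 : abelPsi γ γ' K (γ x) / c * γ' x - abelPsi γ γ' K x / c = 0 := by
          rw [div_mul_eq_mul_div, hCoc x hxI, sub_self]
        rw [h3] at h2
        exact h2.hasDerivWithinAt
    have hb' := hker b (right_mem_Icc.2 hb)
    have hφm1 : φf (-1) = 1 := by
      rw [hφfdef]
      dsimp only
      rw [intervalIntegral.integral_same]
      norm_num
    have hφ1 : φf 1 = 2 := by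
      rw [hφfdef]
      dsimp only
      rw [← hcdef, div_self hcpos.ne']
      norm_num
    rw [hγm1, hφ1, hφm1] at hb'
    linarith
end
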